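/- arXiv:2004.00840 — 2 statements merged into one kernel-verified Lean document; each statement's English description precedes it below -/
import Mathlib

section
/- For every prime p and positive integers k₁,...,k_r with (k₁,...,k_r) ≠ (1,...,1), the star-version cyclic sum formula holds asymptotically: for all sufficiently large p, ∑_{l=1}^{r} ∑_{m=1}^{k_l−1} H_p^⋆(m, k_{l+1},...,k_r, k₁,...,k_{l−1}, k_l−m+1) ≡ ∑_{l=1}^{r} H_p^⋆(1, k_{l+1},...,k_r, k₁,...,k_l) (mod p). -/
/-- Star multiple harmonic sum (non-strict inequalities), with lower bound `a`:
`MHSstar p (k₁ :: … :: k_r) a = ∑_{a ≤ n₁ ≤ … ≤ n_r < p} ∏ nᵢ^{-kᵢ}` in `ZMod p`. -/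
def MHSstar (p : ℕ) : List ℕ → ℕ → ZMod p
  | [], _ => 1
  | k :: ks, a => ∑ n ∈ Finset.Ico a p, ((n : ZMod p))⁻¹ ^ k * MHSstar p ks n

/-- `Hstar p [k₁,…,k_r] = ∑_{0 < n₁ ≤ … ≤ n_r < p} ∏ nᵢ^{-kᵢ}` in `ZMod p`. -/
def Hstar (p : ℕ) (ks : List ℕ) : ZMod p := MHSstar p ks 1

namespace CSFaux

open Finset

variable (p : ℕ)

/-- Chain kernel: `Kc p ws m h = ∑_{m ≤ n₁ ≤ … ≤ n_s < p} (∏ nᵢ⁻ʷⁱ) * h n_s`. -/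
def Kc : List ℕ → ℕ → (ℕ → ZMod p) → ZMod p
  | [], m, h => h m
  | w :: ws, m, h => ∑ n ∈ Finset.Ico m p, ((n : ZMod p))⁻¹ ^ w * Kc ws n h

/-- Connector `cn a b = 1/(b-a)` (natural subtraction; gives `0` on `b = a`). -/
def cn (a b : ℕ) : ZMod p := ((b - a : ℕ) : ZMod p)⁻¹

lemma Kc_nil (m : ℕ) (h : ℕ → ZMod p) : Kc p [] m h = h m := rfl

lemma Kc_cons (w : ℕ) (ws : List ℕ) (m : ℕ) (h : ℕ → ZMod p) :
    Kc p (w :: ws) m h = ∑ n ∈ Finset.Ico m p, ((n : ZMod p))⁻¹ ^ w * Kc p ws n h := rfl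

lemma MHS_Kc : ∀ (ks : List ℕ) (a : ℕ), MHSstar p ks a = Kc p ks a (fun _ => 1)
  | [], a => rfl
  | k :: ks, a => by
      rw [MHSstar, Kc_cons]
      exact Finset.sum_congr rfl fun n _ => by rw [MHS_Kc ks n]

lemma Kc_zero : ∀ (ws : List ℕ) (m : ℕ), Kc p ws m (fun _ => 0) = 0
  | [], m => rfl
  | w :: ws, m => by
      rw [Kc_cons]
      refine Finset.sum_eq_zero fun n _ => ?_
      rw [Kc_zero ws n, mul_zero]

lemma Kc_sum {α : Type*} (s : Finset α) :
    ∀ (ws : List ℕ) (m : ℕ) (h : α → ℕ → ZMod p),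
      Kc p ws m (fun y => ∑ i ∈ s, h i y) = ∑ i ∈ s, Kc p ws m (h i)
  | [], m, h => rfl
  | w :: ws, m, h => by
      rw [Kc_cons]
      rw [Finset.sum_congr rfl (fun n _ => by
        rw [Kc_sum s ws n h, Finset.mul_sum] :
        ∀ n ∈ Finset.Ico m p, ((n : ZMod p))⁻¹ ^ w * Kc p ws n (fun y => ∑ i ∈ s, h i y)
          = ∑ i ∈ s, ((n : ZMod p))⁻¹ ^ w * Kc p ws n (h i)), Finset.sum_comm]
      exact Finset.sum_congr rfl fun i _ => (Kc_cons p w ws m (h i)).symm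

lemma Kc_mul (c : ZMod p) :
    ∀ (ws : List ℕ) (m : ℕ) (h : ℕ → ZMod p),
      Kc p ws m (fun y => c * h y) = c * Kc p ws m h
  | [], m, h => rfl
  | w :: ws, m, h => by
      rw [Kc_cons, Kc_cons, Finset.mul_sum]
      refine Finset.sum_congr rfl fun n _ => ?_
      rw [Kc_mul c ws n h]; ring

lemma Kc_sub (ws : List ℕ) (m : ℕ) (h₁ h₂ : ℕ → ZMod p) :
    Kc p ws m (fun y => h₁ y - h₂ y) = Kc p ws m h₁ - Kc p ws m h₂ := by
  induction ws generalizing m with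
  | nil => rfl
  | cons w ws ih =>
      rw [Kc_cons, Kc_cons, Kc_cons, ← Finset.sum_sub_distrib]
      refine Finset.sum_congr rfl fun n _ => ?_
      rw [ih n]; ring

lemma Kc_add (ws : List ℕ) (m : ℕ) (h₁ h₂ : ℕ → ZMod p) :
    Kc p ws m (fun y => h₁ y + h₂ y) = Kc p ws m h₁ + Kc p ws m h₂ := by
  induction ws generalizing m with
  | nil => rfl
  | cons w ws ih =>
      rw [Kc_cons, Kc_cons, Kc_cons, ← Finset.sum_add_distrib]
      refine Finset.sum_congr rfl fun n _ => ?_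
      rw [ih n]; ring

lemma Kc_congr (ws : List ℕ) (m : ℕ) (h₁ h₂ : ℕ → ZMod p) (hm : m < p)
    (hh : ∀ y, m ≤ y → y < p → h₁ y = h₂ y) : Kc p ws m h₁ = Kc p ws m h₂ := by
  induction ws generalizing m with
  | nil => exact hh m le_rfl hm
  | cons w ws ih =>
      rw [Kc_cons, Kc_cons]
      refine Finset.sum_congr rfl fun n hn => ?_
      rw [Finset.mem_Ico] at hn
      rw [ih n hn.2 fun y hy hyp => hh y (le_trans hn.1 hy) hyp]

lemma Kc_append (v : ℕ) :
    ∀ (us : List ℕ) (m : ℕ) (h : ℕ → ZMod p),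
      Kc p (us ++ [v]) m h
        = Kc p us m (fun y => ∑ b ∈ Finset.Ico y p, ((b : ZMod p))⁻¹ ^ v * h b)
  | [], m, h => rfl
  | u :: us, m, h => by
      rw [List.cons_append, Kc_cons, Kc_cons]
      exact Finset.sum_congr rfl fun n _ => by rw [Kc_append v us n h]

lemma Kc_swap (w : ℕ) (tail : List ℕ) (g : ℕ → ℕ → ZMod p) :
    ∑ a ∈ Finset.Ico 1 p, Kc p (w :: tail) a (g a)
      = ∑ n ∈ Finset.Ico 1 p,
          ((n : ZMod p))⁻¹ ^ w * Kc p tail n (fun y => ∑ c ∈ Finset.Ico 1 (n + 1), g c y) := by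
  simp only [Kc_cons]
  rw [Finset.sum_comm' (s := Finset.Ico 1 p) (t := fun a => Finset.Ico a p)
    (t' := Finset.Ico 1 p) (s' := fun n => Finset.Ico 1 (n + 1))
    (f := fun a n => ((n : ZMod p))⁻¹ ^ w * Kc p tail n (g a))
    (by intro a n; simp only [Finset.mem_Ico]; omega)]
  refine Finset.sum_congr rfl fun n _ => ?_
  rw [Kc_sum p (Finset.Ico 1 (n + 1)) tail n (fun c y => g c y), Finset.mul_sum]

lemma Kc_diag_zero (c : ZMod p) :
    ∀ (ws : List ℕ) {a m : ℕ}, a < m →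
      Kc p ws m (fun y => if y ≤ a then c else 0) = 0
  | [], a, m, h => by simp [Kc_nil, Nat.not_le.mpr h]
  | w :: ws, a, m, h => by
      rw [Kc_cons]
      refine Finset.sum_eq_zero fun n hn => ?_
      rw [Finset.mem_Ico] at hn
      rw [Kc_diag_zero c ws (lt_of_lt_of_le h hn.1), mul_zero]

lemma Kc_diag (c : ZMod p) :
    ∀ (ws : List ℕ) {a : ℕ}, a < p →
      Kc p ws a (fun y => if y ≤ a then c else 0) = ((a : ZMod p))⁻¹ ^ ws.sum * c
  | [], a, ha => by simp [Kc_nil]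
  | w :: ws, a, ha => by
      rw [Kc_cons]
      rw [Finset.sum_eq_single_of_mem a (Finset.mem_Ico.mpr ⟨le_rfl, ha⟩)
        (fun n hn hna => by
          rw [Finset.mem_Ico] at hn
          rw [Kc_diag_zero p c ws (lt_of_le_of_ne hn.1 (Ne.symm hna)), mul_zero])]
      rw [Kc_diag c ws ha, List.sum_cons, pow_add]; ring

section Prime

variable [Fact p.Prime]

lemma natCast_ne_zero {a : ℕ} (h1 : 1 ≤ a) (h2 : a < p) : ((a : ZMod p)) ≠ 0 := by
  rw [Ne, ZMod.natCast_eq_zero_iff]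
  intro hdvd
  exact absurd (Nat.le_of_dvd (by omega) hdvd) (by omega)

lemma geom (x y : ZMod p) (hx : x ≠ 0) (hy : y ≠ 0) :
    ∀ k : ℕ, 1 ≤ k →
      (∑ m ∈ Icc 1 k, x⁻¹ ^ m * y⁻¹ ^ (k + 1 - m)) * (y - x) = x⁻¹ ^ k - y⁻¹ ^ k := by
  intro k hk
  induction k, hk using Nat.le_induction with
  | base =>
      rw [Finset.Icc_self, Finset.sum_singleton]
      show x⁻¹ ^ 1 * y⁻¹ ^ (1 + 1 - 1) * (y - x) = x⁻¹ ^ 1 - y⁻¹ ^ 1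
      linear_combination x⁻¹ * inv_mul_cancel₀ hy - y⁻¹ * inv_mul_cancel₀ hx
  | succ k hk ih =>
      rw [Finset.sum_Icc_succ_top (by omega)]
      have h1 : ∀ m ∈ Icc 1 k, x⁻¹ ^ m * y⁻¹ ^ (k + 1 + 1 - m)
          = y⁻¹ * (x⁻¹ ^ m * y⁻¹ ^ (k + 1 - m)) := by
        intro m hm
        rw [Finset.mem_Icc] at hm
        have : k + 1 + 1 - m = (k + 1 - m) + 1 := by omega
        rw [this, pow_succ]; ring
      rw [Finset.sum_congr rfl h1, ← Finset.mul_sum]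
      have h2 : k + 1 + 1 - (k + 1) = 1 := by omega
      rw [h2]
      have h3 : (y⁻¹ * ∑ m ∈ Icc 1 k, x⁻¹ ^ m * y⁻¹ ^ (k + 1 - m) + x⁻¹ ^ (k + 1) * y⁻¹ ^ 1)
            * (y - x)
          = y⁻¹ * ((∑ m ∈ Icc 1 k, x⁻¹ ^ m * y⁻¹ ^ (k + 1 - m)) * (y - x))
            + x⁻¹ ^ (k + 1) * y⁻¹ ^ 1 * (y - x) := by ring
      rw [h3, ih]
      linear_combination x⁻¹ ^ (k + 1) * inv_mul_cancel₀ hy - x⁻¹ ^ k * y⁻¹ * inv_mul_cancel₀ hx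

lemma cn_eq {a b : ℕ} (hab : a ≤ b) : cn p a b = ((b : ZMod p) - (a : ZMod p))⁻¹ := by
  rw [cn, Nat.cast_sub hab]

lemma ppA {a b : ℕ} (k : ℕ) (hk : 1 ≤ k) (ha : 1 ≤ a) (hab : a ≤ b) (hb : b < p) :
    ∑ m ∈ Icc 1 k, ((a : ZMod p))⁻¹ ^ m * ((b : ZMod p))⁻¹ ^ (k + 1 - m)
      = ((a : ZMod p))⁻¹ ^ k * cn p a b - ((b : ZMod p))⁻¹ ^ k * cn p a b
        + (if b = a then (k : ZMod p) * ((a : ZMod p))⁻¹ ^ (k + 1) else 0) := by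
  by_cases hba : b = a
  · subst hba
    rw [if_pos rfl]
    have hcn : cn p b b = 0 := by rw [cn, Nat.sub_self, Nat.cast_zero, inv_zero]
    rw [hcn]
    simp only [mul_zero, sub_zero, zero_add]
    have h1 : ∀ m ∈ Icc 1 k, ((b : ZMod p))⁻¹ ^ m * ((b : ZMod p))⁻¹ ^ (k + 1 - m)
        = ((b : ZMod p))⁻¹ ^ (k + 1) := by
      intro m hm
      rw [Finset.mem_Icc] at hm
      rw [← pow_add]
      congr 1
      omega
    rw [Finset.sum_congr rfl h1, Finset.sum_const, Nat.card_Icc]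
    simp [nsmul_eq_mul]
  · have hab' : a < b := lt_of_le_of_ne hab fun h => hba h.symm
    have hx : ((a : ZMod p)) ≠ 0 := natCast_ne_zero p ha (lt_of_le_of_lt hab hb)
    have hy : ((b : ZMod p)) ≠ 0 := natCast_ne_zero p (by omega) hb
    have hd : ((b : ZMod p)) - ((a : ZMod p)) ≠ 0 := by
      rw [← Nat.cast_sub hab]
      exact natCast_ne_zero p (by omega) (by omega)
    have hG := geom p (a : ZMod p) (b : ZMod p) hx hy k hk
    rw [if_neg hba, add_zero, cn_eq p hab]
    linear_combination ((b : ZMod p) - (a : ZMod p))⁻¹ * hG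
      - (∑ m ∈ Icc 1 k, ((a : ZMod p))⁻¹ ^ m * ((b : ZMod p))⁻¹ ^ (k + 1 - m))
        * mul_inv_cancel₀ hd

lemma reflect {a : ℕ} (ha : a < p) :
    ∑ j ∈ Ico (p - a) p, ((j : ZMod p))⁻¹ = - ∑ c ∈ Ico 1 (a + 1), ((c : ZMod p))⁻¹ := by
  rw [← Finset.sum_neg_distrib]
  refine Finset.sum_nbij' (fun j => p - j) (fun c => p - c) ?_ ?_ ?_ ?_ ?_
  · intro x hx; simp only [Finset.mem_Ico] at *; omega
  · intro x hx; simp only [Finset.mem_Ico] at *; omega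
  · intro x hx; simp only [Finset.mem_Ico] at hx; omega
  · intro x hx; simp only [Finset.mem_Ico] at hx; omega
  · intro x hx
    simp only [Finset.mem_Ico] at hx
    have h1 : ((p - x : ℕ) : ZMod p) = - (x : ZMod p) := by
      rw [Nat.cast_sub (by omega), ZMod.natCast_self, zero_sub]
    rw [h1, inv_neg, neg_neg]

lemma ppB {a y : ℕ} (ha : 1 ≤ a) (hay : a ≤ y) (hy : y < p) :
    (∑ b ∈ Ico y p, cn p a b) - (∑ c ∈ Ico 1 (a + 1), cn p c y)
      = (∑ c ∈ Ico 1 (a + 1), ((c : ZMod p))⁻¹) + (∑ b ∈ Ico y p, ((b : ZMod p))⁻¹) := by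
  have hE : ∑ b ∈ Ico y p, cn p a b = ∑ j ∈ Ico (y - a) (p - a), ((j : ZMod p))⁻¹ := by
    refine Finset.sum_nbij' (fun b => b - a) (fun j => j + a) ?_ ?_ ?_ ?_ ?_
    · intro x hx; simp only [Finset.mem_Ico] at *; omega
    · intro x hx; simp only [Finset.mem_Ico] at *; omega
    · intro x hx; simp only [Finset.mem_Ico] at hx; omega
    · intro x hx; simp only [Finset.mem_Ico] at hx; omega
    · intro x hx; rfl
  have hF : ∑ c ∈ Ico 1 (a + 1), cn p c y = ∑ j ∈ Ico (y - a) y, ((j : ZMod p))⁻¹ := by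
    refine Finset.sum_nbij' (fun c => y - c) (fun j => y - j) ?_ ?_ ?_ ?_ ?_
    · intro x hx; simp only [Finset.mem_Ico] at *; omega
    · intro x hx; simp only [Finset.mem_Ico] at *; omega
    · intro x hx; simp only [Finset.mem_Ico] at hx; omega
    · intro x hx; simp only [Finset.mem_Ico] at hx; omega
    · intro x hx; rfl
  have h1 : (∑ j ∈ Ico 0 (y - a), ((j : ZMod p))⁻¹) + ∑ j ∈ Ico (y - a) (p - a), ((j : ZMod p))⁻¹
      = ∑ j ∈ Ico 0 (p - a), ((j : ZMod p))⁻¹ :=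
    Finset.sum_Ico_consecutive _ (by omega) (by omega)
  have h2 : (∑ j ∈ Ico 0 (y - a), ((j : ZMod p))⁻¹) + ∑ j ∈ Ico (y - a) y, ((j : ZMod p))⁻¹
      = ∑ j ∈ Ico 0 y, ((j : ZMod p))⁻¹ :=
    Finset.sum_Ico_consecutive _ (by omega) (by omega)
  have h3 : (∑ j ∈ Ico 0 y, ((j : ZMod p))⁻¹) + ∑ j ∈ Ico y p, ((j : ZMod p))⁻¹
      = ∑ j ∈ Ico 0 p, ((j : ZMod p))⁻¹ :=
    Finset.sum_Ico_consecutive _ (by omega) (by omega)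
  have h4 : (∑ j ∈ Ico 0 (p - a), ((j : ZMod p))⁻¹) + ∑ j ∈ Ico (p - a) p, ((j : ZMod p))⁻¹
      = ∑ j ∈ Ico 0 p, ((j : ZMod p))⁻¹ :=
    Finset.sum_Ico_consecutive _ (by omega) (by omega)
  have h5 : ∑ j ∈ Ico (p - a) p, ((j : ZMod p))⁻¹ = - ∑ c ∈ Ico 1 (a + 1), ((c : ZMod p))⁻¹ :=
    reflect p (by omega)
  linear_combination hE - hF + h1 - h2 - h3 + h4 - h5

lemma delta_zero (n : ℕ) (h0 : 0 < n) (hn : n < p - 1) :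
    ∑ a ∈ Ico 1 p, ((a : ZMod p))⁻¹ ^ n = 0 := by
  have hp : 1 ≤ p := (Fact.out : p.Prime).one_lt.le
  have e1 : (∑ a ∈ Ico (0 : ℕ) 1, ((a : ZMod p))⁻¹ ^ n) + ∑ a ∈ Ico 1 p, ((a : ZMod p))⁻¹ ^ n
      = ∑ a ∈ Ico 0 p, ((a : ZMod p))⁻¹ ^ n :=
    Finset.sum_Ico_consecutive _ (by omega) (by omega)
  have e2 : ∑ a ∈ Ico (0 : ℕ) 1, ((a : ZMod p))⁻¹ ^ n = 0 := by
    simp [zero_pow (by omega : n ≠ 0)]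
  have e3 : ∑ a ∈ Ico 0 p, ((a : ZMod p))⁻¹ ^ n = ∑ x : ZMod p, (x⁻¹) ^ n := by
    refine Finset.sum_nbij' (fun a => (a : ZMod p)) (fun x => x.val) ?_ ?_ ?_ ?_ ?_
    · intro x hx; exact Finset.mem_univ _
    · intro x hx; simp only [Finset.mem_Ico]; exact ⟨Nat.zero_le _, ZMod.val_lt x⟩
    · intro x hx; simp only [Finset.mem_Ico] at hx; exact ZMod.val_cast_of_lt hx.2
    · intro x hx; exact ZMod.natCast_rightInverse x
    · intro x hx; rfl
  have e4 : ∑ x : ZMod p, (x⁻¹) ^ n = ∑ x : ZMod p, x ^ n :=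
    Fintype.sum_bijective (fun x : ZMod p => x⁻¹) inv_involutive.bijective _ _ (fun x => rfl)
  have e5 : ∑ x : ZMod p, x ^ n = 0 := by
    refine FiniteField.sum_pow_lt_card_sub_one (ZMod p) n ?_
    rw [ZMod.card]; omega
  rw [← e1, e2, zero_add] at e3
  rw [e3, e4, e5]

lemma Hstar_W (u v : ℕ) (mid : List ℕ) :
    Hstar p (u :: mid ++ [v])
      = ∑ a ∈ Ico 1 p,
          ((a : ZMod p))⁻¹ ^ u * Kc p mid a (fun y => ∑ b ∈ Ico y p, ((b : ZMod p))⁻¹ ^ v) := by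
  show MHSstar p (u :: (mid ++ [v])) 1 = _
  rw [MHSstar]
  refine Finset.sum_congr rfl fun a _ => ?_
  rw [MHS_Kc p (mid ++ [v]) a, Kc_append]
  simp only [mul_one]

lemma lemA (k : ℕ) (hk : 1 ≤ k) (mid : List ℕ) :
    ∑ m ∈ Icc 1 k, Hstar p (m :: mid ++ [k + 1 - m])
      = (∑ a ∈ Ico 1 p, ((a : ZMod p))⁻¹ ^ k
            * Kc p mid a (fun y => ∑ b ∈ Ico y p, cn p a b))
        - (∑ a ∈ Ico 1 p, Kc p mid a (fun y => ∑ b ∈ Ico y p, ((b : ZMod p))⁻¹ ^ k * cn p a b))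
        + (k : ZMod p) * ∑ a ∈ Ico 1 p, ((a : ZMod p))⁻¹ ^ (mid.sum + (k + 1)) := by
  have hL1 : ∀ m ∈ Icc 1 k, Hstar p (m :: mid ++ [k + 1 - m])
      = ∑ a ∈ Ico 1 p, Kc p mid a
          (fun y => ∑ b ∈ Ico y p, ((a : ZMod p))⁻¹ ^ m * ((b : ZMod p))⁻¹ ^ (k + 1 - m)) := by
    intro m _
    rw [Hstar_W]
    refine Finset.sum_congr rfl fun a _ => ?_
    rw [← Kc_mul]
    congr 1
    funext y
    rw [Finset.mul_sum]
  rw [Finset.sum_congr rfl hL1, Finset.sum_comm]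
  have hL2 : ∀ a ∈ Ico 1 p,
      (∑ m ∈ Icc 1 k, Kc p mid a
          (fun y => ∑ b ∈ Ico y p, ((a : ZMod p))⁻¹ ^ m * ((b : ZMod p))⁻¹ ^ (k + 1 - m)))
      = Kc p mid a (fun y => ∑ b ∈ Ico y p, ∑ m ∈ Icc 1 k,
          ((a : ZMod p))⁻¹ ^ m * ((b : ZMod p))⁻¹ ^ (k + 1 - m)) := by
    intro a _
    rw [← Kc_sum]
    congr 1
    funext y
    rw [Finset.sum_comm]
  rw [Finset.sum_congr rfl hL2]
  have hR1 : ∀ a ∈ Ico 1 p,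
      ((a : ZMod p))⁻¹ ^ k * Kc p mid a (fun y => ∑ b ∈ Ico y p, cn p a b)
      = Kc p mid a (fun y => ∑ b ∈ Ico y p, ((a : ZMod p))⁻¹ ^ k * cn p a b) := by
    intro a _
    rw [← Kc_mul]
    congr 1
    funext y
    rw [Finset.mul_sum]
  have hR3 : ∀ a ∈ Ico 1 p, (k : ZMod p) * ((a : ZMod p))⁻¹ ^ (mid.sum + (k + 1))
      = Kc p mid a (fun y => if y ≤ a then (k : ZMod p) * ((a : ZMod p))⁻¹ ^ (k + 1) else 0) := by
    intro a ha
    rw [Finset.mem_Ico] at ha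
    rw [Kc_diag p _ mid ha.2, pow_add]
    ring
  rw [Finset.mul_sum, Finset.sum_congr rfl hR1, Finset.sum_congr rfl hR3,
    ← Finset.sum_sub_distrib, ← Finset.sum_add_distrib]
  refine Finset.sum_congr rfl fun a ha => ?_
  rw [Finset.mem_Ico] at ha
  rw [← Kc_sub, ← Kc_add]
  refine Kc_congr p mid a _ _ ha.2 fun y hay hyp => ?_
  have hif : (if y ≤ a then (k : ZMod p) * ((a : ZMod p))⁻¹ ^ (k + 1) else 0)
      = ∑ b ∈ Ico y p, (if b = a then (k : ZMod p) * ((a : ZMod p))⁻¹ ^ (k + 1) else 0) := by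
    rw [Finset.sum_ite_eq' (Ico y p) a (fun _ => (k : ZMod p) * ((a : ZMod p))⁻¹ ^ (k + 1))]
    simp only [Finset.mem_Ico, ha.2, and_true]
  rw [hif, ← Finset.sum_sub_distrib, ← Finset.sum_add_distrib]
  refine Finset.sum_congr rfl fun b hb => ?_
  rw [Finset.mem_Ico] at hb
  exact ppA p k hk ha.1 (le_trans hay hb.1) hb.2

lemma lemB (k k' : ℕ) (mid mid' : List ℕ) (h : mid ++ [k] = k' :: mid') :
    (∑ a ∈ Ico 1 p, ((a : ZMod p))⁻¹ ^ k'
          * Kc p mid' a (fun y => ∑ b ∈ Ico y p, cn p a b))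
      - (∑ a ∈ Ico 1 p, Kc p mid a (fun y => ∑ b ∈ Ico y p, ((b : ZMod p))⁻¹ ^ k * cn p a b))
      = Hstar p (1 :: mid ++ [k]) + Hstar p (k' :: mid' ++ [1]) := by
  have hY : ∀ a ∈ Ico 1 p,
      Kc p mid a (fun y => ∑ b ∈ Ico y p, ((b : ZMod p))⁻¹ ^ k * cn p a b)
      = Kc p (k' :: mid') a (fun y => cn p a y) := by
    intro a _
    rw [← Kc_append, h]
  rw [Finset.sum_congr rfl hY, Kc_swap]
  have hB : Hstar p (1 :: mid ++ [k])
      = ∑ n ∈ Ico 1 p, ((n : ZMod p))⁻¹ ^ k'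
          * Kc p mid' n (fun y => ∑ c ∈ Ico 1 (n + 1), ((c : ZMod p))⁻¹) := by
    show MHSstar p (1 :: (mid ++ [k])) 1 = _
    rw [MHSstar]
    have h1 : ∀ a ∈ Ico 1 p,
        ((a : ZMod p))⁻¹ ^ 1 * MHSstar p (mid ++ [k]) a
        = Kc p (k' :: mid') a (fun _ => ((a : ZMod p))⁻¹) := by
      intro a _
      rw [MHS_Kc, h, pow_one, ← Kc_mul]
      simp only [mul_one]
    rw [Finset.sum_congr rfl h1, Kc_swap]
  have hC : Hstar p (k' :: mid' ++ [1])
      = ∑ a ∈ Ico 1 p, ((a : ZMod p))⁻¹ ^ k'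
          * Kc p mid' a (fun y => ∑ b ∈ Ico y p, ((b : ZMod p))⁻¹) := by
    rw [Hstar_W]
    simp only [pow_one]
  rw [hB, hC, ← Finset.sum_sub_distrib, ← Finset.sum_add_distrib]
  refine Finset.sum_congr rfl fun a ha => ?_
  rw [Finset.mem_Ico] at ha
  have h0 : Kc p mid' a (fun y =>
      (∑ b ∈ Ico y p, cn p a b) - (∑ c ∈ Ico 1 (a + 1), cn p c y)
        - (∑ c ∈ Ico 1 (a + 1), ((c : ZMod p))⁻¹) - (∑ b ∈ Ico y p, ((b : ZMod p))⁻¹)) = 0 := by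
    rw [Kc_congr p mid' a _ (fun _ => 0) ha.2 ?_, Kc_zero]
    intro y hay hyp
    have hpb := ppB p ha.1 hay hyp
    linear_combination hpb
  rw [Kc_sub, Kc_sub, Kc_sub] at h0
  linear_combination ((a : ZMod p))⁻¹ ^ k' * h0

end Prime

lemma rot_cons_eq (ks : List ℕ) {l : ℕ} (hl : l < ks.length) :
    ks.rotate (l + 1) = (ks.drop (l + 1) ++ ks.take l) ++ [ks.getD l 1] := by
  rw [List.rotate_eq_drop_append_take (by omega), List.take_succ,
    List.getElem?_eq_getElem hl, List.getD_eq_getElem (hn := hl), List.append_assoc]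
  rfl

lemma rot_dropLast (ks : List ℕ) {l : ℕ} (hl : l < ks.length) :
    (ks.rotate (l + 1)).dropLast = ks.drop (l + 1) ++ ks.take l := by
  rw [rot_cons_eq ks hl, List.dropLast_concat]

lemma rot_fact1 (ks : List ℕ) {l : ℕ} (hl : l < ks.length) :
    ks.getD l 1 :: (ks.rotate (l + 1)).dropLast = ks.rotate l := by
  rw [rot_dropLast ks hl, List.rotate_eq_drop_append_take (by omega : l ≤ ks.length),
    List.drop_eq_getElem_cons hl, List.getD_eq_getElem (hn := hl), List.cons_append]

lemma rot_fact2 (ks : List ℕ) {l : ℕ} (hl : l < ks.length) :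
    (ks.rotate (l + 1)).dropLast ++ [ks.getD l 1] = ks.rotate (l + 1) := by
  rw [rot_dropLast ks hl, ← rot_cons_eq ks hl]

lemma rot_sum (ks : List ℕ) {l : ℕ} (hl : l < ks.length) :
    ((ks.rotate (l + 1)).dropLast).sum + ks.getD l 1 = ks.sum := by
  have h := List.Perm.sum_eq (List.rotate_perm ks l)
  rw [← rot_fact1 ks hl, List.sum_cons] at h
  omega

lemma sum_mod_rotate {M : Type*} [AddCommMonoid M] (f : ℕ → M) (r : ℕ) :
    ∑ l ∈ Finset.range r, f ((l + 1) % r) = ∑ l ∈ Finset.range r, f l := by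
  cases r with
  | zero => simp
  | succ n =>
      rw [Finset.sum_range_succ, Finset.sum_range_succ' f]
      congr 1
      · refine Finset.sum_congr rfl fun l hl => ?_
        rw [Finset.mem_range] at hl
        rw [Nat.mod_eq_of_lt (by omega)]
      · rw [Nat.mod_self]

/-- The `X`-quantity `P(ρ_l ++ [0])`. -/
def Xterm (p : ℕ) (ks : List ℕ) (l : ℕ) : ZMod p :=
  ∑ a ∈ Finset.Ico 1 p, ((a : ZMod p))⁻¹ ^ (ks.getD l 1)
    * Kc p ((ks.rotate (l + 1)).dropLast) a (fun y => ∑ b ∈ Finset.Ico y p, cn p a b)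

/-- The `Y`-quantity `P(0 :: ρ_{l+1})`. -/
def Yterm (p : ℕ) (ks : List ℕ) (l : ℕ) : ZMod p :=
  ∑ a ∈ Finset.Ico 1 p, Kc p ((ks.rotate (l + 1)).dropLast) a
    (fun y => ∑ b ∈ Finset.Ico y p, ((b : ZMod p))⁻¹ ^ (ks.getD l 1) * cn p a b)

/-- The boundary term `Hstar(k_l, mid_l, 1)`. -/
def Cterm (p : ℕ) (ks : List ℕ) (l : ℕ) : ZMod p :=
  Hstar p (ks.getD l 1 :: (ks.rotate (l + 1)).dropLast ++ [1])

end CSFaux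

open CSFaux Finset in
theorem cyclic_sum_formula_star
    (ks : List ℕ) (hne : ks ≠ []) (hpos : ∀ k ∈ ks, 1 ≤ k)
    (hnotall1 : ¬ ∀ k ∈ ks, k = 1) :
    ∃ N : ℕ, ∀ p : ℕ, p.Prime → N < p →
      ∑ l ∈ Finset.range ks.length, ∑ m ∈ Finset.Icc 1 (ks.getD l 1 - 1),
          Hstar p (m :: ((ks.rotate (l + 1)).dropLast ++ [ks.getD l 1 - m + 1]))
        = ∑ l ∈ Finset.range ks.length, Hstar p (1 :: ks.rotate (l + 1)) := by
  classical
  refine ⟨ks.sum + 2, fun p hp hpk => ?_⟩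
  haveI : Fact p.Prime := ⟨hp⟩
  have hkpos : ∀ l, l < ks.length → 1 ≤ ks.getD l 1 := by
    intro l hl
    rw [List.getD_eq_getElem (hn := hl)]
    exact hpos _ (List.getElem_mem hl)
  have hΔ : ∑ a ∈ Ico 1 p, ((a : ZMod p))⁻¹ ^ (ks.sum + 1) = 0 :=
    delta_zero p _ (by omega) (by omega)
  -- Step A : full inner sums equal X - Y
  have stepA : ∀ l ∈ range ks.length,
      (∑ m ∈ Icc 1 (ks.getD l 1),
        Hstar p (m :: (ks.rotate (l + 1)).dropLast ++ [ks.getD l 1 + 1 - m]))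
      = Xterm p ks l - Yterm p ks l := by
    intro l hl
    rw [Finset.mem_range] at hl
    rw [lemA p (ks.getD l 1) (hkpos l hl) ((ks.rotate (l + 1)).dropLast)]
    have hsum : ((ks.rotate (l + 1)).dropLast).sum + (ks.getD l 1 + 1) = ks.sum + 1 := by
      have := rot_sum ks hl; omega
    rw [hsum, hΔ, mul_zero, add_zero, Xterm, Yterm]
  -- Step B : the cyclic pairing
  have stepB : ∀ l ∈ range ks.length,
      Xterm p ks ((l + 1) % ks.length) - Yterm p ks l
      = Hstar p (1 :: ks.rotate (l + 1)) + Cterm p ks ((l + 1) % ks.length) := by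
    intro l hl
    rw [Finset.mem_range] at hl
    have hr0 : 0 < ks.length := by omega
    have hl' : (l + 1) % ks.length < ks.length := Nat.mod_lt _ hr0
    have hrot : ks.rotate ((l + 1) % ks.length) = ks.rotate (l + 1) := List.rotate_mod ks (l + 1)
    have hws : (ks.rotate (l + 1)).dropLast ++ [ks.getD l 1]
        = ks.getD ((l + 1) % ks.length) 1
            :: (ks.rotate ((l + 1) % ks.length + 1)).dropLast := by
      rw [rot_fact2 ks hl, ← hrot, ← rot_fact1 ks hl']
    have hlem := lemB p (ks.getD l 1) (ks.getD ((l + 1) % ks.length) 1)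
      ((ks.rotate (l + 1)).dropLast) ((ks.rotate ((l + 1) % ks.length + 1)).dropLast) hws
    have hconv : (1 :: (ks.rotate (l + 1)).dropLast) ++ [ks.getD l 1]
        = 1 :: ks.rotate (l + 1) := by
      rw [List.cons_append, rot_fact2 ks hl]
    rw [hconv] at hlem
    rw [Xterm, Yterm, Cterm]
    exact hlem
  -- splitting off the top term of each inner sum
  have hsplit : ∀ l ∈ range ks.length,
      (∑ m ∈ Icc 1 (ks.getD l 1 - 1),
          Hstar p (m :: ((ks.rotate (l + 1)).dropLast ++ [ks.getD l 1 - m + 1])))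
        + Cterm p ks l
      = ∑ m ∈ Icc 1 (ks.getD l 1),
          Hstar p (m :: (ks.rotate (l + 1)).dropLast ++ [ks.getD l 1 + 1 - m]) := by
    intro l hl
    rw [Finset.mem_range] at hl
    have hk := hkpos l hl
    have h1 : Icc 1 (ks.getD l 1) = Icc 1 ((ks.getD l 1 - 1) + 1) := by
      congr 1; omega
    rw [h1, Finset.sum_Icc_succ_top (by omega)]
    congr 1
    · refine Finset.sum_congr rfl fun m hm => ?_
      rw [Finset.mem_Icc] at hm
      have : ks.getD l 1 - m + 1 = ks.getD l 1 + 1 - m := by omega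
      rw [this, List.cons_append]
    · rw [Cterm]
      have e1 : ks.getD l 1 - 1 + 1 = ks.getD l 1 := by omega
      rw [e1]
      have e2 : ks.getD l 1 + 1 - ks.getD l 1 = 1 := by omega
      rw [e2]
  -- main computation
  have main : ∑ l ∈ range ks.length,
      (∑ m ∈ Icc 1 (ks.getD l 1),
        Hstar p (m :: (ks.rotate (l + 1)).dropLast ++ [ks.getD l 1 + 1 - m]))
      = (∑ l ∈ range ks.length, Hstar p (1 :: ks.rotate (l + 1)))
        + ∑ l ∈ range ks.length, Cterm p ks l := by
    calc
      ∑ l ∈ range ks.length, (∑ m ∈ Icc 1 (ks.getD l 1),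
          Hstar p (m :: (ks.rotate (l + 1)).dropLast ++ [ks.getD l 1 + 1 - m]))
        = ∑ l ∈ range ks.length, (Xterm p ks l - Yterm p ks l) :=
          Finset.sum_congr rfl stepA
      _ = (∑ l ∈ range ks.length, Xterm p ks l) - ∑ l ∈ range ks.length, Yterm p ks l :=
          Finset.sum_sub_distrib _ _
      _ = (∑ l ∈ range ks.length, Xterm p ks ((l + 1) % ks.length))
            - ∑ l ∈ range ks.length, Yterm p ks l := by
          rw [sum_mod_rotate (Xterm p ks) ks.length]
      _ = ∑ l ∈ range ks.length, (Xterm p ks ((l + 1) % ks.length) - Yterm p ks l) :=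
          (Finset.sum_sub_distrib _ _).symm
      _ = ∑ l ∈ range ks.length,
            (Hstar p (1 :: ks.rotate (l + 1)) + Cterm p ks ((l + 1) % ks.length)) :=
          Finset.sum_congr rfl stepB
      _ = (∑ l ∈ range ks.length, Hstar p (1 :: ks.rotate (l + 1)))
            + ∑ l ∈ range ks.length, Cterm p ks ((l + 1) % ks.length) :=
          Finset.sum_add_distrib
      _ = (∑ l ∈ range ks.length, Hstar p (1 :: ks.rotate (l + 1)))
            + ∑ l ∈ range ks.length, Cterm p ks l := by
          rw [sum_mod_rotate (Cterm p ks) ks.length]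
  have hfinal : (∑ l ∈ range ks.length, ∑ m ∈ Icc 1 (ks.getD l 1 - 1),
        Hstar p (m :: ((ks.rotate (l + 1)).dropLast ++ [ks.getD l 1 - m + 1])))
      + ∑ l ∈ range ks.length, Cterm p ks l
      = (∑ l ∈ range ks.length, Hstar p (1 :: ks.rotate (l + 1)))
        + ∑ l ∈ range ks.length, Cterm p ks l := by
    rw [← Finset.sum_add_distrib, Finset.sum_congr rfl hsplit, main]
  exact add_right_cancel hfinal
end

section
/- Define the depth-2, two-block cyclic multiple harmonic sum H_p^{cyc}([(a,b),(c)]) := ∑ 1/(n₁^a n₂^b n₃^c) over triples (n₁,n₂,n₃) with 0 < n₁ < n₂ < p, 0 < n₃ < p, n₁ ≤ n₃, and n₃ ≤ n₂ (inverses in Z/pZ). Then for all sufficiently large primes p: 2·H_p^{cyc}([(1,3),(3)]) + 2·H_p^{cyc}([(1,4),(2)]) + 2·H_p^{cyc}([(2,3),(2)]) + H_p^{cyc}([(1,1,3),(2)]) − H_p^{cyc}([(1,2,2),(2)]) ≡ 0 (mod p), where H_p^{cyc}([(k₁,k₂,k₃),(c)]) is the analogous sum over 0 < n₁ < n₂ <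 n₃ < p, 0 < n₄ < p with n₁ ≤ n₄ and n₄ ≤ n₃. -/
/-- Cyclic multiple harmonic sum for the multi-index `[(a,b),(c)]`:
sum of `n₁⁻ᵃ n₂⁻ᵇ n₃⁻ᶜ` over `0 < n₁ < n₂ < p`, `0 < n₃ < p`, `n₁ ≤ n₃`, `n₃ ≤ n₂`. -/
def Hcyc2 (p a b c : ℕ) : ZMod p :=
  ∑ n₁ ∈ Finset.Ioo 0 p, ∑ n₂ ∈ Finset.Ioo n₁ p, ∑ n₃ ∈ Finset.Icc n₁ n₂,
    ((n₁ : ZMod p))⁻¹ ^ a * ((n₂ : ZMod p))⁻¹ ^ b * ((n₃ : ZMod p))⁻¹ ^ c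

/-- Cyclic multiple harmonic sum for the multi-index `[(k₁,k₂,k₃),(c)]`:
sum of `n₁⁻ᵏ¹ n₂⁻ᵏ² n₃⁻ᵏ³ n₄⁻ᶜ` over `0 < n₁ < n₂ < n₃ < p`, `0 < n₄ < p`,
`n₁ ≤ n₄`, `n₄ ≤ n₃`. -/
def Hcyc3 (p k₁ k₂ k₃ c : ℕ) : ZMod p :=
  ∑ n₁ ∈ Finset.Ioo 0 p, ∑ n₂ ∈ Finset.Ioo n₁ p, ∑ n₃ ∈ Finset.Ioo n₂ p,
    ∑ n₄ ∈ Finset.Icc n₁ n₃,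
      ((n₁ : ZMod p))⁻¹ ^ k₁ * ((n₂ : ZMod p))⁻¹ ^ k₂ * ((n₃ : ZMod p))⁻¹ ^ k₃
        * ((n₄ : ZMod p))⁻¹ ^ c

namespace MHSAux

open Finset

/-! ### Generic finite-sum helpers -/

section Generic
variable {K : Type*} [CommRing K] (p : ℕ)

lemma filter_Ioo_lower (a u : ℕ) : (Ioo 0 u).filter (fun b => a < b) = Ioo a u := by
  ext x; simp only [mem_filter, mem_Ioo]; omega

lemma h_unfilter_lower (f : ℕ → K) (a u : ℕ) :
    ∑ b ∈ Ioo a u, f b = ∑ b ∈ Ioo 0 u, if a < b then f b else 0 := by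
  rw [← filter_Ioo_lower a u, Finset.sum_filter]

lemma h_swap (l u : ℕ) (f : ℕ → ℕ → K) :
    ∑ b ∈ Ioo l u, ∑ a ∈ Ioo l b, f a b = ∑ a ∈ Ioo l u, ∑ b ∈ Ioo a u, f a b := by
  have L : ∀ b ∈ Ioo l u, ∑ a ∈ Ioo l b, f a b
      = ∑ a ∈ Ioo l u, if a < b then f a b else 0 := by
    intro b hb
    simp only [mem_Ioo] at hb
    rw [← Finset.sum_filter]; congr 1
    ext x; simp only [mem_filter, mem_Ioo]; omega
  have R : ∀ a ∈ Ioo l u, ∑ b ∈ Ioo a u, f a b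
      = ∑ b ∈ Ioo l u, if a < b then f a b else 0 := by
    intro a ha
    simp only [mem_Ioo] at ha
    rw [← Finset.sum_filter]; congr 1
    ext x; simp only [mem_filter, mem_Ioo]; omega
  rw [Finset.sum_congr rfl L, Finset.sum_congr rfl R, Finset.sum_comm]

lemma h_refl (l u : ℕ) (f : ℕ → K) :
    ∑ a ∈ Ioo l u, f a = ∑ a ∈ Ioo l u, f (l + u - a) := by
  refine Finset.sum_nbij' (i := fun a => l + u - a) (j := fun a => l + u - a) ?_ ?_ ?_ ?_ ?_
  · intro a ha; simp only [mem_Ioo] at *; omega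
  · intro a ha; simp only [mem_Ioo] at *; omega
  · intro a ha; simp only [mem_Ioo] at ha; show l + u - (l + u - a) = a; omega
  · intro a ha; simp only [mem_Ioo] at ha; show l + u - (l + u - a) = a; omega
  · intro a ha
    have h : l + u - (l + u - a) = a := by simp only [mem_Ioo] at ha; omega
    rw [h]

lemma h_split (l m u : ℕ) (h1 : l < m) (h2 : m < u) (f : ℕ → K) :
    ∑ x ∈ Ioo l u, f x = (∑ x ∈ Ioo l m, f x) + f m + ∑ x ∈ Ioo m u, f x := by
  have e : Ioo l u = (Ioo l m) ∪ insert m (Ioo m u) := by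
    ext x; simp only [mem_union, mem_insert, mem_Ioo]; omega
  have hd : Disjoint (Ioo l m) (insert m (Ioo m u)) := by
    simp only [Finset.disjoint_left, mem_insert, mem_Ioo]
    intro x hx; push_neg; omega
  rw [e, Finset.sum_union hd, Finset.sum_insert (by simp), ← add_assoc]

lemma h_splitIcc (a b : ℕ) (hab : a < b) (f : ℕ → K) :
    ∑ x ∈ Icc a b, f x = f a + (∑ x ∈ Ioo a b, f x) + f b := by
  have e : Icc a b = insert a (insert b (Ioo a b)) := by
    ext x; simp only [mem_insert, mem_Icc, mem_Ioo]; omega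
  rw [e, Finset.sum_insert (by simp only [mem_insert, mem_Ioo]; omega),
    Finset.sum_insert (by simp only [mem_Ioo]; omega), add_comm (f b), ← add_assoc]

lemma sumT2 (f : ℕ → ℕ → K) :
    ∑ a ∈ Ioo 0 p, ∑ b ∈ Ioo a p, f a b
      = ∑ q ∈ ((Ioo 0 p) ×ˢ (Ioo 0 p)).filter (fun q => q.1 < q.2), f q.1 q.2 := by
  rw [Finset.sum_filter, Finset.sum_product]
  exact Finset.sum_congr rfl fun a _ => h_unfilter_lower _ a p

lemma sumT3 (f : ℕ → ℕ → ℕ → K) :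
    ∑ a ∈ Ioo 0 p, ∑ b ∈ Ioo a p, ∑ c ∈ Ioo b p, f a b c
      = ∑ q ∈ ((Ioo 0 p) ×ˢ (Ioo 0 p) ×ˢ (Ioo 0 p)).filter
          (fun q => q.1 < q.2.1 ∧ q.2.1 < q.2.2), f q.1 q.2.1 q.2.2 := by
  rw [Finset.sum_filter, Finset.sum_product]
  refine Finset.sum_congr rfl fun a _ => ?_
  rw [Finset.sum_product, h_unfilter_lower (fun b => ∑ c ∈ Ioo b p, f a b c) a p]
  refine Finset.sum_congr rfl fun b _ => ?_
  simp only [ite_and]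
  by_cases hab : a < b
  · simp only [if_pos hab]; exact h_unfilter_lower _ b p
  · simp only [if_neg hab, Finset.sum_const_zero]

lemma sumT4 (f : ℕ → ℕ → ℕ → ℕ → K) :
    ∑ a ∈ Ioo 0 p, ∑ b ∈ Ioo a p, ∑ c ∈ Ioo b p, ∑ d ∈ Ioo c p, f a b c d
      = ∑ q ∈ ((Ioo 0 p) ×ˢ (Ioo 0 p) ×ˢ (Ioo 0 p) ×ˢ (Ioo 0 p)).filter
          (fun q => q.1 < q.2.1 ∧ q.2.1 < q.2.2.1 ∧ q.2.2.1 < q.2.2.2),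
          f q.1 q.2.1 q.2.2.1 q.2.2.2 := by
  rw [Finset.sum_filter, Finset.sum_product]
  refine Finset.sum_congr rfl fun a _ => ?_
  rw [Finset.sum_product,
    h_unfilter_lower (fun b => ∑ c ∈ Ioo b p, ∑ d ∈ Ioo c p, f a b c d) a p]
  refine Finset.sum_congr rfl fun b _ => ?_
  simp only [ite_and]
  by_cases hab : a < b
  · simp only [if_pos hab]
    rw [Finset.sum_product, h_unfilter_lower (fun c => ∑ d ∈ Ioo c p, f a b c d) b p]
    refine Finset.sum_congr rfl fun c _ => ?_
    by_cases hbc : b < c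
    · simp only [if_pos hbc]; exact h_unfilter_lower _ c p
    · simp only [if_neg hbc, Finset.sum_const_zero]
  · simp only [if_neg hab, Finset.sum_const_zero]

lemma rev2 (f : ℕ → ℕ → K) :
    ∑ a ∈ Ioo 0 p, ∑ b ∈ Ioo a p, f a b
      = ∑ a ∈ Ioo 0 p, ∑ b ∈ Ioo a p, f (p - b) (p - a) := by
  rw [sumT2, sumT2]
  refine Finset.sum_nbij' (i := fun q => (p - q.2, p - q.1)) (j := fun q => (p - q.2, p - q.1))
    ?_ ?_ ?_ ?_ ?_
  · intro q hq; simp only [mem_filter, mem_product, mem_Ioo] at *; omega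
  · intro q hq; simp only [mem_filter, mem_product, mem_Ioo] at *; omega
  · intro q hq; simp only [mem_filter, mem_product, mem_Ioo] at hq
    have h1 : p - (p - q.1) = q.1 := by omega
    have h2 : p - (p - q.2) = q.2 := by omega
    simp only [h1, h2]
  · intro q hq; simp only [mem_filter, mem_product, mem_Ioo] at hq
    have h1 : p - (p - q.1) = q.1 := by omega
    have h2 : p - (p - q.2) = q.2 := by omega
    simp only [h1, h2]
  · intro q hq; simp only [mem_filter, mem_product, mem_Ioo] at hq
    have h1 : p - (p - q.1) = q.1 := by omega
    have h2 : p - (p - q.2) = q.2 := by omega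
    simp only [h1, h2]

lemma rev3 (f : ℕ → ℕ → ℕ → K) :
    ∑ a ∈ Ioo 0 p, ∑ b ∈ Ioo a p, ∑ c ∈ Ioo b p, f a b c
      = ∑ a ∈ Ioo 0 p, ∑ b ∈ Ioo a p, ∑ c ∈ Ioo b p, f (p - c) (p - b) (p - a) := by
  rw [sumT3, sumT3]
  refine Finset.sum_nbij' (i := fun q => (p - q.2.2, p - q.2.1, p - q.1))
    (j := fun q => (p - q.2.2, p - q.2.1, p - q.1)) ?_ ?_ ?_ ?_ ?_ <;>
  · intro q hq; simp only [mem_filter, mem_product, mem_Ioo] at *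
    first
    | omega
    | (have h1 : p - (p - q.1) = q.1 := by omega
       have h2 : p - (p - q.2.1) = q.2.1 := by omega
       have h3 : p - (p - q.2.2) = q.2.2 := by omega
       simp only [h1, h2, h3])

lemma rev4 (f : ℕ → ℕ → ℕ → ℕ → K) :
    ∑ a ∈ Ioo 0 p, ∑ b ∈ Ioo a p, ∑ c ∈ Ioo b p, ∑ d ∈ Ioo c p, f a b c d
      = ∑ a ∈ Ioo 0 p, ∑ b ∈ Ioo a p, ∑ c ∈ Ioo b p, ∑ d ∈ Ioo c p,
          f (p - d) (p - c) (p - b) (p - a) := by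
  rw [sumT4, sumT4]
  refine Finset.sum_nbij' (i := fun q => (p - q.2.2.2, p - q.2.2.1, p - q.2.1, p - q.1))
    (j := fun q => (p - q.2.2.2, p - q.2.2.1, p - q.2.1, p - q.1)) ?_ ?_ ?_ ?_ ?_ <;>
  · intro q hq; simp only [mem_filter, mem_product, mem_Ioo] at *
    first
    | omega
    | (have h1 : p - (p - q.1) = q.1 := by omega
       have h2 : p - (p - q.2.1) = q.2.1 := by omega
       have h3 : p - (p - q.2.2.1) = q.2.2.1 := by omega
       have h4 : p - (p - q.2.2.2) = q.2.2.2 := by omega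
       simp only [h1, h2, h3, h4])

lemma st12g (f g h : ℕ → K) :
    (∑ x ∈ Ioo 0 p, f x) * (∑ a ∈ Ioo 0 p, ∑ b ∈ Ioo a p, g a * h b)
      = (∑ a ∈ Ioo 0 p, ∑ b ∈ Ioo a p, ∑ c ∈ Ioo b p, f a * g b * h c)
      + (∑ a ∈ Ioo 0 p, ∑ b ∈ Ioo a p, (f a * g a) * h b)
      + (∑ a ∈ Ioo 0 p, ∑ b ∈ Ioo a p, ∑ c ∈ Ioo b p, g a * f b * h c)
      + (∑ a ∈ Ioo 0 p, ∑ b ∈ Ioo a p, g a * (f b * h b))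
      + (∑ a ∈ Ioo 0 p, ∑ b ∈ Ioo a p, ∑ c ∈ Ioo b p, g a * h b * f c) := by
  rw [Finset.mul_sum]
  have step1 : ∀ a ∈ Ioo 0 p,
      (∑ x ∈ Ioo 0 p, f x) * (∑ b ∈ Ioo a p, g a * h b)
      = (∑ b ∈ Ioo a p, ∑ x ∈ Ioo 0 a, f x * (g a * h b))
        + (∑ b ∈ Ioo a p, f a * (g a * h b))
        + (∑ b ∈ Ioo a p, ∑ x ∈ Ioo a b, f x * (g a * h b))
        + (∑ b ∈ Ioo a p, f b * (g a * h b))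
        + (∑ b ∈ Ioo a p, ∑ x ∈ Ioo b p, f x * (g a * h b)) := by
    intro a ha
    simp only [mem_Ioo] at ha
    rw [Finset.mul_sum]
    rw [← Finset.sum_add_distrib, ← Finset.sum_add_distrib, ← Finset.sum_add_distrib,
      ← Finset.sum_add_distrib]
    refine Finset.sum_congr rfl fun b hb => ?_
    simp only [mem_Ioo] at hb
    rw [h_split 0 a p ha.1 ha.2 f, h_split a b p hb.1 hb.2 f]
    simp only [add_mul, Finset.sum_mul]
    ring
  rw [Finset.sum_congr rfl step1]
  rw [Finset.sum_add_distrib, Finset.sum_add_distrib, Finset.sum_add_distrib,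
    Finset.sum_add_distrib]
  congr 1
  · congr 1
    · congr 1
      · congr 1
        · -- piece 1 : x ∈ Ioo 0 a  →  chain x < a < b
          have swapxb : ∀ a ∈ Ioo 0 p, ∑ b ∈ Ioo a p, ∑ x ∈ Ioo 0 a, f x * (g a * h b)
              = ∑ x ∈ Ioo 0 a, ∑ b ∈ Ioo a p, f x * (g a * h b) :=
            fun a _ => Finset.sum_comm
          rw [Finset.sum_congr rfl swapxb, h_swap 0 p]
          refine Finset.sum_congr rfl fun x _ => Finset.sum_congr rfl fun a _ =>
            Finset.sum_congr rfl fun b _ => by ring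
        · -- piece 2 : x = a
          refine Finset.sum_congr rfl fun a _ => Finset.sum_congr rfl fun b _ => by ring
      · -- piece 3 : a < x < b
        refine Finset.sum_congr rfl fun a _ => ?_
        rw [h_swap a p]
        refine Finset.sum_congr rfl fun x _ => Finset.sum_congr rfl fun b _ => by ring
    · -- piece 4 : x = b
      refine Finset.sum_congr rfl fun a _ => Finset.sum_congr rfl fun b _ => by ring
  · -- piece 5 : b < x
    refine Finset.sum_congr rfl fun a _ => Finset.sum_congr rfl fun b _ =>
      Finset.sum_congr rfl fun x _ => by ring

lemma st13g (f g h i : ℕ → K) :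
    (∑ x ∈ Ioo 0 p, f x)
        * (∑ a ∈ Ioo 0 p, ∑ b ∈ Ioo a p, ∑ c ∈ Ioo b p, g a * h b * i c)
      = (∑ a ∈ Ioo 0 p, ∑ b ∈ Ioo a p, ∑ c ∈ Ioo b p, ∑ d ∈ Ioo c p,
          f a * g b * h c * i d)
      + (∑ a ∈ Ioo 0 p, ∑ b ∈ Ioo a p, ∑ c ∈ Ioo b p, (f a * g a) * h b * i c)
      + (∑ a ∈ Ioo 0 p, ∑ b ∈ Ioo a p, ∑ c ∈ Ioo b p, ∑ d ∈ Ioo c p,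
          g a * f b * h c * i d)
      + (∑ a ∈ Ioo 0 p, ∑ b ∈ Ioo a p, ∑ c ∈ Ioo b p, g a * (f b * h b) * i c)
      + (∑ a ∈ Ioo 0 p, ∑ b ∈ Ioo a p, ∑ c ∈ Ioo b p, ∑ d ∈ Ioo c p,
          g a * h b * f c * i d)
      + (∑ a ∈ Ioo 0 p, ∑ b ∈ Ioo a p, ∑ c ∈ Ioo b p, g a * h b * (f c * i c))
      + (∑ a ∈ Ioo 0 p, ∑ b ∈ Ioo a p, ∑ c ∈ Ioo b p, ∑ d ∈ Ioo c p,
          g a * h b * i c * f d) := by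
  rw [Finset.mul_sum]
  have step1 : ∀ a ∈ Ioo 0 p,
      (∑ x ∈ Ioo 0 p, f x) * (∑ b ∈ Ioo a p, ∑ c ∈ Ioo b p, g a * h b * i c)
      = (∑ b ∈ Ioo a p, ∑ c ∈ Ioo b p, ∑ x ∈ Ioo 0 a, f x * (g a * h b * i c))
        + (∑ b ∈ Ioo a p, ∑ c ∈ Ioo b p, f a * (g a * h b * i c))
        + (∑ b ∈ Ioo a p, ∑ c ∈ Ioo b p, ∑ x ∈ Ioo a b, f x * (g a * h b * i c))
        + (∑ b ∈ Ioo a p, ∑ c ∈ Ioo b p, f b * (g a * h b * i c))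
        + (∑ b ∈ Ioo a p, ∑ c ∈ Ioo b p, ∑ x ∈ Ioo b c, f x * (g a * h b * i c))
        + (∑ b ∈ Ioo a p, ∑ c ∈ Ioo b p, f c * (g a * h b * i c))
        + (∑ b ∈ Ioo a p, ∑ c ∈ Ioo b p, ∑ x ∈ Ioo c p, f x * (g a * h b * i c)) := by
    intro a ha
    simp only [mem_Ioo] at ha
    rw [Finset.mul_sum]
    rw [← Finset.sum_add_distrib, ← Finset.sum_add_distrib, ← Finset.sum_add_distrib,
      ← Finset.sum_add_distrib, ← Finset.sum_add_distrib, ← Finset.sum_add_distrib]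
    refine Finset.sum_congr rfl fun b hb => ?_
    simp only [mem_Ioo] at hb
    rw [Finset.mul_sum]
    rw [← Finset.sum_add_distrib, ← Finset.sum_add_distrib, ← Finset.sum_add_distrib,
      ← Finset.sum_add_distrib, ← Finset.sum_add_distrib, ← Finset.sum_add_distrib]
    refine Finset.sum_congr rfl fun c hc => ?_
    simp only [mem_Ioo] at hc
    rw [h_split 0 a p ha.1 ha.2 f, h_split a b p hb.1 hb.2 f, h_split b c p hc.1 hc.2 f]
    simp only [add_mul, Finset.sum_mul]
    ring
  rw [Finset.sum_congr rfl step1]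
  rw [Finset.sum_add_distrib, Finset.sum_add_distrib, Finset.sum_add_distrib,
    Finset.sum_add_distrib, Finset.sum_add_distrib, Finset.sum_add_distrib]
  congr 1
  · congr 1
    · congr 1
      · congr 1
        · congr 1
          · congr 1
            · -- piece 1 : x < a < b < c
              have sw1 : ∀ a ∈ Ioo 0 p,
                  ∑ b ∈ Ioo a p, ∑ c ∈ Ioo b p, ∑ x ∈ Ioo 0 a, f x * (g a * h b * i c)
                  = ∑ x ∈ Ioo 0 a, ∑ b ∈ Ioo a p, ∑ c ∈ Ioo b p,
                      f x * (g a * h b * i c) := by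
                intro a _
                rw [Finset.sum_congr rfl fun b _ => Finset.sum_comm]
                exact Finset.sum_comm
              rw [Finset.sum_congr rfl sw1, h_swap 0 p]
              refine Finset.sum_congr rfl fun x _ => Finset.sum_congr rfl fun a _ =>
                Finset.sum_congr rfl fun b _ => Finset.sum_congr rfl fun c _ => by ring
            · -- piece 2 : x = a
              refine Finset.sum_congr rfl fun a _ => Finset.sum_congr rfl fun b _ =>
                Finset.sum_congr rfl fun c _ => by ring
          · -- piece 3 : a < x < b
            refine Finset.sum_congr rfl fun a _ => ?_
            rw [Finset.sum_congr rfl fun b _ => Finset.sum_comm, h_swap a p]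
            refine Finset.sum_congr rfl fun x _ => Finset.sum_congr rfl fun b _ =>
              Finset.sum_congr rfl fun c _ => by ring
        · -- piece 4 : x = b
          refine Finset.sum_congr rfl fun a _ => Finset.sum_congr rfl fun b _ =>
            Finset.sum_congr rfl fun c _ => by ring
      · -- piece 5 : b < x < c
        refine Finset.sum_congr rfl fun a _ => Finset.sum_congr rfl fun b _ => ?_
        rw [h_swap b p]
        refine Finset.sum_congr rfl fun x _ => Finset.sum_congr rfl fun c _ => by ring
    · -- piece 6 : x = c
      refine Finset.sum_congr rfl fun a _ => Finset.sum_congr rfl fun b _ =>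
        Finset.sum_congr rfl fun c _ => by ring
  · -- piece 7 : c < x
    refine Finset.sum_congr rfl fun a _ => Finset.sum_congr rfl fun b _ =>
      Finset.sum_congr rfl fun c _ => Finset.sum_congr rfl fun x _ => by ring

end Generic

/-! ### The strict multiple harmonic sums -/

section MHS
variable (p : ℕ) [Fact p.Prime]

noncomputable def W (n : ℕ) : ZMod p := ((n : ZMod p))⁻¹

noncomputable def H1S (k : ℕ) : ZMod p := ∑ a ∈ Ioo 0 p, W p a ^ k

noncomputable def H2S (k l : ℕ) : ZMod p :=
  ∑ a ∈ Ioo 0 p, ∑ b ∈ Ioo a p, W p a ^ k * W p b ^ l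

noncomputable def H3S (k l m : ℕ) : ZMod p :=
  ∑ a ∈ Ioo 0 p, ∑ b ∈ Ioo a p, ∑ c ∈ Ioo b p, W p a ^ k * W p b ^ l * W p c ^ m

noncomputable def H4S (k l m n : ℕ) : ZMod p :=
  ∑ a ∈ Ioo 0 p, ∑ b ∈ Ioo a p, ∑ c ∈ Ioo b p, ∑ d ∈ Ioo c p,
    W p a ^ k * W p b ^ l * W p c ^ m * W p d ^ n

lemma cast_ne_zero_of_lt {a : ℕ} (h0 : 0 < a) (h1 : a < p) : (a : ZMod p) ≠ 0 := by
  rw [Ne, ZMod.natCast_eq_zero_iff]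
  intro hdvd
  exact absurd (Nat.le_of_dvd h0 hdvd) (by omega)

lemma cast_sub_ne_zero {b c : ℕ} (h0 : b < c) (h1 : c < p) :
    (c : ZMod p) - (b : ZMod p) ≠ 0 := by
  have h : ((c - b : ℕ) : ZMod p) = (c : ZMod p) - b := by
    rw [Nat.cast_sub h0.le]
  rw [← h]
  exact cast_ne_zero_of_lt p (by omega) (by omega)

lemma W_reflect {a : ℕ} (ha : a ∈ Ioo 0 p) : W p (p - a) = - W p a := by
  simp only [mem_Ioo] at ha
  unfold W
  rw [Nat.cast_sub ha.2.le, ZMod.natCast_self, zero_sub, inv_neg]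

lemma inv_reflect_top {c d : ℕ} (hcd : c < d) (hdp : d < p) :
    W p (c + p - d) = -(((d : ZMod p) - (c : ZMod p))⁻¹) := by
  unfold W
  have h1 : ((c + p - d : ℕ) : ZMod p) = (c : ZMod p) - d := by
    rw [Nat.cast_sub (by omega : d ≤ c + p)]
    push_cast [ZMod.natCast_self]
    ring
  rw [h1, show (c : ZMod p) - d = -((d : ZMod p) - c) by ring, inv_neg]

lemma sub_reflect {l m x : ℕ} (hlx : l < x) (hxm : x < m) :
    (m : ZMod p) - ((l + m - x : ℕ) : ZMod p) = (x : ZMod p) - (l : ZMod p) := by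
  rw [Nat.cast_sub (by omega : x ≤ l + m)]
  push_cast
  ring

lemma pf1 (A S : ZMod p) (hA : A ≠ 0) (hS : S ≠ 0) (hAS : S - A ≠ 0) :
    A⁻¹ * (S - A)⁻¹ = S⁻¹ * A⁻¹ + S⁻¹ * (S - A)⁻¹ := by
  field_simp
  ring

lemma pf2 (A S : ZMod p) (hA : A ≠ 0) (hS : S ≠ 0) (hAS : S - A ≠ 0) :
    A⁻¹ ^ 2 * (S - A)⁻¹
      = S⁻¹ * A⁻¹ ^ 2 + S⁻¹ ^ 2 * A⁻¹ + S⁻¹ ^ 2 * (S - A)⁻¹ := by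
  calc A⁻¹ ^ 2 * (S - A)⁻¹ = A⁻¹ * (A⁻¹ * (S - A)⁻¹) := by ring
    _ = A⁻¹ * (S⁻¹ * A⁻¹ + S⁻¹ * (S - A)⁻¹) := by rw [pf1 p A S hA hS hAS]
    _ = S⁻¹ * A⁻¹ ^ 2 + S⁻¹ * (A⁻¹ * (S - A)⁻¹) := by ring
    _ = S⁻¹ * A⁻¹ ^ 2 + S⁻¹ * (S⁻¹ * A⁻¹ + S⁻¹ * (S - A)⁻¹) := by
        rw [pf1 p A S hA hS hAS]
    _ = S⁻¹ * A⁻¹ ^ 2 + S⁻¹ ^ 2 * A⁻¹ + S⁻¹ ^ 2 * (S - A)⁻¹ := by ring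

lemma pf3 (A S : ZMod p) (hA : A ≠ 0) (hS : S ≠ 0) (hAS : S - A ≠ 0) :
    A⁻¹ ^ 3 * (S - A)⁻¹
      = S⁻¹ * A⁻¹ ^ 3 + S⁻¹ ^ 2 * A⁻¹ ^ 2 + S⁻¹ ^ 3 * A⁻¹ + S⁻¹ ^ 3 * (S - A)⁻¹ := by
  calc A⁻¹ ^ 3 * (S - A)⁻¹ = A⁻¹ * (A⁻¹ ^ 2 * (S - A)⁻¹) := by ring
    _ = A⁻¹ * (S⁻¹ * A⁻¹ ^ 2 + S⁻¹ ^ 2 * A⁻¹ + S⁻¹ ^ 2 * (S - A)⁻¹) := by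
        rw [pf2 p A S hA hS hAS]
    _ = S⁻¹ * A⁻¹ ^ 3 + S⁻¹ ^ 2 * A⁻¹ ^ 2 + S⁻¹ ^ 2 * (A⁻¹ * (S - A)⁻¹) := by ring
    _ = S⁻¹ * A⁻¹ ^ 3 + S⁻¹ ^ 2 * A⁻¹ ^ 2 + S⁻¹ ^ 2 * (S⁻¹ * A⁻¹ + S⁻¹ * (S - A)⁻¹) := by
        rw [pf1 p A S hA hS hAS]
    _ = S⁻¹ * A⁻¹ ^ 3 + S⁻¹ ^ 2 * A⁻¹ ^ 2 + S⁻¹ ^ 3 * A⁻¹ + S⁻¹ ^ 3 * (S - A)⁻¹ := by ring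

lemma H1S_eq_zero {k : ℕ} (hk0 : 0 < k) (hk : k < p - 1) : H1S p k = 0 := by
  unfold H1S
  have step1 : ∑ a ∈ Ioo 0 p, W p a ^ k
      = ∑ x ∈ (Finset.univ : Finset (ZMod p)).erase 0, (x⁻¹) ^ k := by
    refine Finset.sum_nbij' (i := fun a => ((a : ZMod p))) (j := fun x => x.val) ?_ ?_ ?_ ?_ ?_
    · intro a ha
      simp only [Finset.mem_erase, Finset.mem_univ, and_true]
      simp only [mem_Ioo] at ha
      exact cast_ne_zero_of_lt p ha.1 ha.2
    · intro x hx
      simp only [Finset.mem_erase, Finset.mem_univ, and_true] at hx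
      simp only [mem_Ioo]
      exact ⟨Nat.pos_of_ne_zero fun h => hx (by rwa [← ZMod.val_eq_zero]), ZMod.val_lt x⟩
    · intro a ha
      simp only [mem_Ioo] at ha
      exact ZMod.val_cast_of_lt ha.2
    · intro x hx
      show ((x.val : ℕ) : ZMod p) = x; rw [ZMod.natCast_val, ZMod.cast_id]
    · intro a ha; rfl
  rw [step1]
  have step2 : ∑ x ∈ (Finset.univ : Finset (ZMod p)).erase 0, (x⁻¹) ^ k
      = ∑ x : ZMod p, (x⁻¹) ^ k := by
    apply Finset.sum_erase
    simp [zero_pow hk0.ne']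
  rw [step2]
  have step3 : ∑ x : ZMod p, (x⁻¹) ^ k = ∑ x : ZMod p, x ^ k := by
    refine Finset.sum_nbij' (i := fun x => x⁻¹) (j := fun x => x⁻¹) ?_ ?_ ?_ ?_ ?_
    · intro x _; exact Finset.mem_univ _
    · intro x _; exact Finset.mem_univ _
    · intro x _; exact inv_inv x
    · intro x _; exact inv_inv x
    · intro x _; rfl
  rw [step3]
  exact FiniteField.sum_pow_lt_card_sub_one (K := ZMod p) k (by rwa [ZMod.card])

lemma rev2H (k l : ℕ) : H2S p k l = (-1 : ZMod p) ^ (k + l) * H2S p l k := by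
  unfold H2S
  rw [rev2 p (fun a b => W p a ^ k * W p b ^ l)]
  rw [Finset.mul_sum]
  refine Finset.sum_congr rfl fun a ha => ?_
  rw [Finset.mul_sum]
  refine Finset.sum_congr rfl fun b hb => ?_
  have hbp : b ∈ Ioo 0 p := by
    simp only [mem_Ioo] at *; omega
  rw [W_reflect p hbp, W_reflect p ha, neg_pow, neg_pow, pow_add]
  ring

lemma rev3H (k l m : ℕ) : H3S p k l m = (-1 : ZMod p) ^ (k + l + m) * H3S p m l k := by
  unfold H3S
  rw [rev3 p (fun a b c => W p a ^ k * W p b ^ l * W p c ^ m)]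
  rw [Finset.mul_sum]
  refine Finset.sum_congr rfl fun a ha => ?_
  rw [Finset.mul_sum]
  refine Finset.sum_congr rfl fun b hb => ?_
  rw [Finset.mul_sum]
  refine Finset.sum_congr rfl fun c hc => ?_
  simp only [mem_Ioo] at ha hb hc
  have hbp : b ∈ Ioo 0 p := by simp only [mem_Ioo]; omega
  have hcp : c ∈ Ioo 0 p := by simp only [mem_Ioo]; omega
  have hap : a ∈ Ioo 0 p := by simp only [mem_Ioo]; omega
  rw [W_reflect p hcp, W_reflect p hbp, W_reflect p hap, neg_pow, neg_pow, neg_pow,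
    pow_add, pow_add]
  ring

lemma rev4H (k l m n : ℕ) :
    H4S p k l m n = (-1 : ZMod p) ^ (k + l + m + n) * H4S p n m l k := by
  unfold H4S
  rw [rev4 p (fun a b c d => W p a ^ k * W p b ^ l * W p c ^ m * W p d ^ n)]
  rw [Finset.mul_sum]
  refine Finset.sum_congr rfl fun a ha => ?_
  rw [Finset.mul_sum]
  refine Finset.sum_congr rfl fun b hb => ?_
  rw [Finset.mul_sum]
  refine Finset.sum_congr rfl fun c hc => ?_
  rw [Finset.mul_sum]
  refine Finset.sum_congr rfl fun d hd => ?_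
  simp only [mem_Ioo] at ha hb hc hd
  have hap : a ∈ Ioo 0 p := by simp only [mem_Ioo]; omega
  have hbp : b ∈ Ioo 0 p := by simp only [mem_Ioo]; omega
  have hcp : c ∈ Ioo 0 p := by simp only [mem_Ioo]; omega
  have hdp : d ∈ Ioo 0 p := by simp only [mem_Ioo]; omega
  rw [W_reflect p hdp, W_reflect p hcp, W_reflect p hbp, W_reflect p hap,
    neg_pow, neg_pow, neg_pow, neg_pow, pow_add, pow_add, pow_add]
  ring

-- weight-7 reversal relations
lemma hrev2 (k l : ℕ) (h : k + l = 7) : H2S p k l + H2S p l k = 0 := by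
  have e := rev2H p k l
  rw [h] at e
  have h7 : ((-1 : ZMod p)) ^ (7 : ℕ) = -1 := by norm_num
  rw [h7] at e
  rw [e]; ring

lemma hrev3 (k l m : ℕ) (h : k + l + m = 7) : H3S p k l m + H3S p m l k = 0 := by
  have e := rev3H p k l m
  rw [h] at e
  have h7 : ((-1 : ZMod p)) ^ (7 : ℕ) = -1 := by norm_num
  rw [h7] at e
  rw [e]; ring

lemma hrev4 (k l m n : ℕ) (h : k + l + m + n = 7) : H4S p k l m n + H4S p n m l k = 0 := by
  have e := rev4H p k l m n
  rw [h] at e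
  have h7 : ((-1 : ZMod p)) ^ (7 : ℕ) = -1 := by norm_num
  rw [h7] at e
  rw [e]; ring

lemma st12H (k l m : ℕ) :
    H1S p k * H2S p l m
      = H3S p k l m + H2S p (k + l) m + H3S p l k m + H2S p l (k + m)
        + H3S p l m k := by
  unfold H1S H2S H3S
  have e := st12g p (fun x => W p x ^ k) (fun x => W p x ^ l) (fun x => W p x ^ m)
  have d1 : (∑ a ∈ Ioo 0 p, ∑ b ∈ Ioo a p, (W p a ^ k * W p a ^ l) * W p b ^ m)
      = ∑ a ∈ Ioo 0 p, ∑ b ∈ Ioo a p, W p a ^ (k + l) * W p b ^ m := by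
    refine Finset.sum_congr rfl fun a _ => Finset.sum_congr rfl fun b _ => by
      rw [pow_add]
  have d2 : (∑ a ∈ Ioo 0 p, ∑ b ∈ Ioo a p, W p a ^ l * (W p b ^ k * W p b ^ m))
      = ∑ a ∈ Ioo 0 p, ∑ b ∈ Ioo a p, W p a ^ l * W p b ^ (k + m) := by
    refine Finset.sum_congr rfl fun a _ => Finset.sum_congr rfl fun b _ => by
      rw [pow_add]
  linear_combination e + d1 + d2

lemma st13H (k l m n : ℕ) :
    H1S p k * H3S p l m n
      = H4S p k l m n + H3S p (k + l) m n + H4S p l k m n + H3S p l (k + m) n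
        + H4S p l m k n + H3S p l m (k + n) + H4S p l m n k := by
  unfold H1S H3S H4S
  have e := st13g p (fun x => W p x ^ k) (fun x => W p x ^ l) (fun x => W p x ^ m)
    (fun x => W p x ^ n)
  have d1 : (∑ a ∈ Ioo 0 p, ∑ b ∈ Ioo a p, ∑ c ∈ Ioo b p,
        (W p a ^ k * W p a ^ l) * W p b ^ m * W p c ^ n)
      = ∑ a ∈ Ioo 0 p, ∑ b ∈ Ioo a p, ∑ c ∈ Ioo b p,
          W p a ^ (k + l) * W p b ^ m * W p c ^ n := by
    refine Finset.sum_congr rfl fun a _ => Finset.sum_congr rfl fun b _ =>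
      Finset.sum_congr rfl fun c _ => by rw [pow_add]
  have d2 : (∑ a ∈ Ioo 0 p, ∑ b ∈ Ioo a p, ∑ c ∈ Ioo b p,
        W p a ^ l * (W p b ^ k * W p b ^ m) * W p c ^ n)
      = ∑ a ∈ Ioo 0 p, ∑ b ∈ Ioo a p, ∑ c ∈ Ioo b p,
          W p a ^ l * W p b ^ (k + m) * W p c ^ n := by
    refine Finset.sum_congr rfl fun a _ => Finset.sum_congr rfl fun b _ =>
      Finset.sum_congr rfl fun c _ => by rw [pow_add]
  have d3 : (∑ a ∈ Ioo 0 p, ∑ b ∈ Ioo a p, ∑ c ∈ Ioo b p,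
        W p a ^ l * W p b ^ m * (W p c ^ k * W p c ^ n))
      = ∑ a ∈ Ioo 0 p, ∑ b ∈ Ioo a p, ∑ c ∈ Ioo b p,
          W p a ^ l * W p b ^ m * W p c ^ (k + n) := by
    refine Finset.sum_congr rfl fun a _ => Finset.sum_congr rfl fun b _ =>
      Finset.sum_congr rfl fun c _ => by rw [pow_add]
  linear_combination e + d1 + d2 + d3

lemma D1 : 3 * H4S p 2 3 1 1 + H4S p 2 2 2 1 + 2 * H4S p 2 1 3 1
    + 2 * H4S p 1 2 3 1 = 0 := by
  -- Step A : reflect the top variable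
  have e1 : H4S p 2 3 1 1
      = - ∑ a ∈ Ioo 0 p, ∑ b ∈ Ioo a p, ∑ c ∈ Ioo b p, ∑ s ∈ Ioo c p,
          W p a ^ 2 * W p b ^ 3 * W p c ^ 1 * ((s : ZMod p) - (c : ZMod p))⁻¹ := by
    unfold H4S
    rw [← Finset.sum_neg_distrib]
    refine Finset.sum_congr rfl fun a ha => ?_
    rw [← Finset.sum_neg_distrib]
    refine Finset.sum_congr rfl fun b hb => ?_
    rw [← Finset.sum_neg_distrib]
    refine Finset.sum_congr rfl fun c hc => ?_
    rw [h_refl c p (fun d => W p a ^ 2 * W p b ^ 3 * W p c ^ 1 * W p d ^ 1),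
      ← Finset.sum_neg_distrib]
    refine Finset.sum_congr rfl fun s hs => ?_
    simp only [mem_Ioo] at ha hb hc hs
    rw [inv_reflect_top p hs.1 hs.2]
    ring
  -- Step B : partial fractions on (c, s-c)
  have e2 : (∑ a ∈ Ioo 0 p, ∑ b ∈ Ioo a p, ∑ c ∈ Ioo b p, ∑ s ∈ Ioo c p,
        W p a ^ 2 * W p b ^ 3 * W p c ^ 1 * ((s : ZMod p) - (c : ZMod p))⁻¹)
      = H4S p 2 3 1 1
        + ∑ a ∈ Ioo 0 p, ∑ b ∈ Ioo a p, ∑ c ∈ Ioo b p, ∑ s ∈ Ioo c p,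
            W p a ^ 2 * W p b ^ 3 * ((s : ZMod p) - (c : ZMod p))⁻¹ * W p s := by
    unfold H4S
    rw [← Finset.sum_add_distrib]
    refine Finset.sum_congr rfl fun a ha => ?_
    rw [← Finset.sum_add_distrib]
    refine Finset.sum_congr rfl fun b hb => ?_
    rw [← Finset.sum_add_distrib]
    refine Finset.sum_congr rfl fun c hc => ?_
    rw [← Finset.sum_add_distrib]
    refine Finset.sum_congr rfl fun s hs => ?_
    simp only [mem_Ioo] at ha hb hc hs
    have hc0 : ((c : ZMod p)) ≠ 0 := cast_ne_zero_of_lt p (by omega) (by omega)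
    have hs0 : ((s : ZMod p)) ≠ 0 := cast_ne_zero_of_lt p (by omega) (by omega)
    have hsc : (s : ZMod p) - (c : ZMod p) ≠ 0 := cast_sub_ne_zero p (by omega) (by omega)
    have key := pf1 p (c : ZMod p) (s : ZMod p) hc0 hs0 hsc
    calc W p a ^ 2 * W p b ^ 3 * W p c ^ 1 * ((s : ZMod p) - (c : ZMod p))⁻¹
        = W p a ^ 2 * W p b ^ 3 * (((c : ZMod p))⁻¹ * ((s : ZMod p) - (c : ZMod p))⁻¹) := by
          unfold W; ring
      _ = W p a ^ 2 * W p b ^ 3 * (((s : ZMod p))⁻¹ * ((c : ZMod p))⁻¹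
            + ((s : ZMod p))⁻¹ * ((s : ZMod p) - (c : ZMod p))⁻¹) := by rw [key]
      _ = W p a ^ 2 * W p b ^ 3 * W p c ^ 1 * W p s ^ 1
            + W p a ^ 2 * W p b ^ 3 * ((s : ZMod p) - (c : ZMod p))⁻¹ * W p s := by
          unfold W; ring
  -- Step C : re-index the difference to (c - b)
  have e3 : (∑ a ∈ Ioo 0 p, ∑ b ∈ Ioo a p, ∑ c ∈ Ioo b p, ∑ s ∈ Ioo c p,
        W p a ^ 2 * W p b ^ 3 * ((s : ZMod p) - (c : ZMod p))⁻¹ * W p s)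
      = ∑ a ∈ Ioo 0 p, ∑ b ∈ Ioo a p, ∑ c ∈ Ioo b p, ∑ s ∈ Ioo c p,
          W p a ^ 2 * W p b ^ 3 * ((c : ZMod p) - (b : ZMod p))⁻¹ * W p s := by
    refine Finset.sum_congr rfl fun a ha => ?_
    refine Finset.sum_congr rfl fun b hb => ?_
    rw [← h_swap b p (fun c s =>
      W p a ^ 2 * W p b ^ 3 * ((s : ZMod p) - (c : ZMod p))⁻¹ * W p s)]
    rw [← h_swap b p (fun c s =>
      W p a ^ 2 * W p b ^ 3 * ((c : ZMod p) - (b : ZMod p))⁻¹ * W p s)]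
    refine Finset.sum_congr rfl fun s hs => ?_
    rw [h_refl b s (fun c =>
      W p a ^ 2 * W p b ^ 3 * ((s : ZMod p) - (c : ZMod p))⁻¹ * W p s)]
    refine Finset.sum_congr rfl fun c hc => ?_
    simp only [mem_Ioo] at hc
    rw [sub_reflect p hc.1 hc.2]
  -- Step D : partial fractions on (b, c-b)
  have e4 : (∑ a ∈ Ioo 0 p, ∑ b ∈ Ioo a p, ∑ c ∈ Ioo b p, ∑ s ∈ Ioo c p,
        W p a ^ 2 * W p b ^ 3 * ((c : ZMod p) - (b : ZMod p))⁻¹ * W p s)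
      = H4S p 2 3 1 1 + H4S p 2 2 2 1 + H4S p 2 1 3 1
        + ∑ a ∈ Ioo 0 p, ∑ b ∈ Ioo a p, ∑ c ∈ Ioo b p, ∑ s ∈ Ioo c p,
            W p a ^ 2 * ((c : ZMod p) - (b : ZMod p))⁻¹ * W p c ^ 3 * W p s := by
    unfold H4S
    rw [← Finset.sum_add_distrib, ← Finset.sum_add_distrib, ← Finset.sum_add_distrib]
    refine Finset.sum_congr rfl fun a ha => ?_
    rw [← Finset.sum_add_distrib, ← Finset.sum_add_distrib, ← Finset.sum_add_distrib]
    refine Finset.sum_congr rfl fun b hb => ?_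
    rw [← Finset.sum_add_distrib, ← Finset.sum_add_distrib, ← Finset.sum_add_distrib]
    refine Finset.sum_congr rfl fun c hc => ?_
    rw [← Finset.sum_add_distrib, ← Finset.sum_add_distrib, ← Finset.sum_add_distrib]
    refine Finset.sum_congr rfl fun s hs => ?_
    simp only [mem_Ioo] at ha hb hc hs
    have hb0 : ((b : ZMod p)) ≠ 0 := cast_ne_zero_of_lt p (by omega) (by omega)
    have hc0 : ((c : ZMod p)) ≠ 0 := cast_ne_zero_of_lt p (by omega) (by omega)
    have hcb : (c : ZMod p) - (b : ZMod p) ≠ 0 := cast_sub_ne_zero p (by omega) (by omega)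
    have key := pf3 p (b : ZMod p) (c : ZMod p) hb0 hc0 hcb
    calc W p a ^ 2 * W p b ^ 3 * ((c : ZMod p) - (b : ZMod p))⁻¹ * W p s
        = W p a ^ 2 * (((b : ZMod p))⁻¹ ^ 3 * ((c : ZMod p) - (b : ZMod p))⁻¹) * W p s := by
          unfold W; ring
      _ = W p a ^ 2 * (((c : ZMod p))⁻¹ * ((b : ZMod p))⁻¹ ^ 3
            + ((c : ZMod p))⁻¹ ^ 2 * ((b : ZMod p))⁻¹ ^ 2
            + ((c : ZMod p))⁻¹ ^ 3 * ((b : ZMod p))⁻¹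
            + ((c : ZMod p))⁻¹ ^ 3 * ((c : ZMod p) - (b : ZMod p))⁻¹) * W p s := by rw [key]
      _ = W p a ^ 2 * W p b ^ 3 * W p c ^ 1 * W p s ^ 1
            + W p a ^ 2 * W p b ^ 2 * W p c ^ 2 * W p s ^ 1
            + W p a ^ 2 * W p b ^ 1 * W p c ^ 3 * W p s ^ 1
            + W p a ^ 2 * ((c : ZMod p) - (b : ZMod p))⁻¹ * W p c ^ 3 * W p s := by
          unfold W; ring
  -- Step E : re-index the difference to (b - a)
  have e5 : (∑ a ∈ Ioo 0 p, ∑ b ∈ Ioo a p, ∑ c ∈ Ioo b p, ∑ s ∈ Ioo c p,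
        W p a ^ 2 * ((c : ZMod p) - (b : ZMod p))⁻¹ * W p c ^ 3 * W p s)
      = ∑ a ∈ Ioo 0 p, ∑ c ∈ Ioo a p, ∑ b ∈ Ioo a c, ∑ s ∈ Ioo c p,
          W p a ^ 2 * ((b : ZMod p) - (a : ZMod p))⁻¹ * W p c ^ 3 * W p s := by
    refine Finset.sum_congr rfl fun a ha => ?_
    rw [← h_swap a p (fun b c => ∑ s ∈ Ioo c p,
      W p a ^ 2 * ((c : ZMod p) - (b : ZMod p))⁻¹ * W p c ^ 3 * W p s)]
    refine Finset.sum_congr rfl fun c hc => ?_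
    rw [h_refl a c (fun b => ∑ s ∈ Ioo c p,
      W p a ^ 2 * ((c : ZMod p) - (b : ZMod p))⁻¹ * W p c ^ 3 * W p s)]
    refine Finset.sum_congr rfl fun b hb => ?_
    simp only [mem_Ioo] at hb
    refine Finset.sum_congr rfl fun s hs => ?_
    rw [sub_reflect p hb.1 hb.2]
  -- Step F : partial fractions on (a, b-a)
  have e6 : (∑ a ∈ Ioo 0 p, ∑ c ∈ Ioo a p, ∑ b ∈ Ioo a c, ∑ s ∈ Ioo c p,
        W p a ^ 2 * ((b : ZMod p) - (a : ZMod p))⁻¹ * W p c ^ 3 * W p s)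
      = (∑ a ∈ Ioo 0 p, ∑ c ∈ Ioo a p, ∑ b ∈ Ioo a c, ∑ s ∈ Ioo c p,
          W p a ^ 2 * W p b ^ 1 * W p c ^ 3 * W p s ^ 1)
        + (∑ a ∈ Ioo 0 p, ∑ c ∈ Ioo a p, ∑ b ∈ Ioo a c, ∑ s ∈ Ioo c p,
            W p a ^ 1 * W p b ^ 2 * W p c ^ 3 * W p s ^ 1)
        + (∑ a ∈ Ioo 0 p, ∑ c ∈ Ioo a p, ∑ b ∈ Ioo a c, ∑ s ∈ Ioo c p,
            ((b : ZMod p) - (a : ZMod p))⁻¹ * W p b ^ 2 * W p c ^ 3 * W p s) := by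
    rw [← Finset.sum_add_distrib, ← Finset.sum_add_distrib]
    refine Finset.sum_congr rfl fun a ha => ?_
    rw [← Finset.sum_add_distrib, ← Finset.sum_add_distrib]
    refine Finset.sum_congr rfl fun c hc => ?_
    rw [← Finset.sum_add_distrib, ← Finset.sum_add_distrib]
    refine Finset.sum_congr rfl fun b hb => ?_
    rw [← Finset.sum_add_distrib, ← Finset.sum_add_distrib]
    refine Finset.sum_congr rfl fun s hs => ?_
    simp only [mem_Ioo] at ha hb hc hs
    have ha0 : ((a : ZMod p)) ≠ 0 := cast_ne_zero_of_lt p (by omega) (by omega)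
    have hb0 : ((b : ZMod p)) ≠ 0 := cast_ne_zero_of_lt p (by omega) (by omega)
    have hba : (b : ZMod p) - (a : ZMod p) ≠ 0 := cast_sub_ne_zero p (by omega) (by omega)
    have key := pf2 p (a : ZMod p) (b : ZMod p) ha0 hb0 hba
    calc W p a ^ 2 * ((b : ZMod p) - (a : ZMod p))⁻¹ * W p c ^ 3 * W p s
        = (((a : ZMod p))⁻¹ ^ 2 * ((b : ZMod p) - (a : ZMod p))⁻¹)
            * (W p c ^ 3 * W p s) := by unfold W; ring
      _ = (((b : ZMod p))⁻¹ * ((a : ZMod p))⁻¹ ^ 2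
            + ((b : ZMod p))⁻¹ ^ 2 * ((a : ZMod p))⁻¹
            + ((b : ZMod p))⁻¹ ^ 2 * ((b : ZMod p) - (a : ZMod p))⁻¹)
            * (W p c ^ 3 * W p s) := by rw [key]
      _ = W p a ^ 2 * W p b ^ 1 * W p c ^ 3 * W p s ^ 1
            + W p a ^ 1 * W p b ^ 2 * W p c ^ 3 * W p s ^ 1
            + ((b : ZMod p) - (a : ZMod p))⁻¹ * W p b ^ 2 * W p c ^ 3 * W p s := by
          unfold W; ring
  -- Step G : first two pieces re-nest to standard chains
  have e7 : (∑ a ∈ Ioo 0 p, ∑ c ∈ Ioo a p, ∑ b ∈ Ioo a c, ∑ s ∈ Ioo c p,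
        W p a ^ 2 * W p b ^ 1 * W p c ^ 3 * W p s ^ 1) = H4S p 2 1 3 1 := by
    unfold H4S
    refine Finset.sum_congr rfl fun a ha => ?_
    rw [h_swap a p (fun b c => ∑ s ∈ Ioo c p,
      W p a ^ 2 * W p b ^ 1 * W p c ^ 3 * W p s ^ 1)]
  have e8 : (∑ a ∈ Ioo 0 p, ∑ c ∈ Ioo a p, ∑ b ∈ Ioo a c, ∑ s ∈ Ioo c p,
        W p a ^ 1 * W p b ^ 2 * W p c ^ 3 * W p s ^ 1) = H4S p 1 2 3 1 := by
    unfold H4S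
    refine Finset.sum_congr rfl fun a ha => ?_
    rw [h_swap a p (fun b c => ∑ s ∈ Ioo c p,
      W p a ^ 1 * W p b ^ 2 * W p c ^ 3 * W p s ^ 1)]
  -- Step H : last piece, reflect a and re-nest
  have e9 : (∑ a ∈ Ioo 0 p, ∑ c ∈ Ioo a p, ∑ b ∈ Ioo a c, ∑ s ∈ Ioo c p,
        ((b : ZMod p) - (a : ZMod p))⁻¹ * W p b ^ 2 * W p c ^ 3 * W p s)
      = H4S p 1 2 3 1 := by
    rw [← h_swap 0 p (fun a c => ∑ b ∈ Ioo a c, ∑ s ∈ Ioo c p,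
      ((b : ZMod p) - (a : ZMod p))⁻¹ * W p b ^ 2 * W p c ^ 3 * W p s)]
    have inner : ∀ c ∈ Ioo 0 p,
        (∑ a ∈ Ioo 0 c, ∑ b ∈ Ioo a c, ∑ s ∈ Ioo c p,
          ((b : ZMod p) - (a : ZMod p))⁻¹ * W p b ^ 2 * W p c ^ 3 * W p s)
        = ∑ b ∈ Ioo 0 c, ∑ a ∈ Ioo 0 b, ∑ s ∈ Ioo c p,
            W p a ^ 1 * W p b ^ 2 * W p c ^ 3 * W p s ^ 1 := by
      intro c hc
      rw [← h_swap 0 c (fun a b => ∑ s ∈ Ioo c p,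
        ((b : ZMod p) - (a : ZMod p))⁻¹ * W p b ^ 2 * W p c ^ 3 * W p s)]
      refine Finset.sum_congr rfl fun b hb => ?_
      rw [h_refl 0 b (fun a => ∑ s ∈ Ioo c p,
        ((b : ZMod p) - (a : ZMod p))⁻¹ * W p b ^ 2 * W p c ^ 3 * W p s)]
      refine Finset.sum_congr rfl fun a ha => ?_
      simp only [mem_Ioo] at ha
      refine Finset.sum_congr rfl fun s hs => ?_
      rw [sub_reflect p ha.1 ha.2, Nat.cast_zero, sub_zero]
      unfold W
      ring
    rw [Finset.sum_congr rfl inner]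
    -- now re-nest  c, b, a, s  →  a, b, c, s
    rw [h_swap 0 p (fun b c => ∑ a ∈ Ioo 0 b, ∑ s ∈ Ioo c p,
      W p a ^ 1 * W p b ^ 2 * W p c ^ 3 * W p s ^ 1)]
    have comm1 : ∀ b ∈ Ioo 0 p,
        (∑ c ∈ Ioo b p, ∑ a ∈ Ioo 0 b, ∑ s ∈ Ioo c p,
          W p a ^ 1 * W p b ^ 2 * W p c ^ 3 * W p s ^ 1)
        = ∑ a ∈ Ioo 0 b, ∑ c ∈ Ioo b p, ∑ s ∈ Ioo c p,
            W p a ^ 1 * W p b ^ 2 * W p c ^ 3 * W p s ^ 1 :=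
      fun b _ => Finset.sum_comm
    rw [Finset.sum_congr rfl comm1]
    rw [h_swap 0 p (fun a b => ∑ c ∈ Ioo b p, ∑ s ∈ Ioo c p,
      W p a ^ 1 * W p b ^ 2 * W p c ^ 3 * W p s ^ 1)]
    unfold H4S
    rfl
  linear_combination e1 - e2 - e3 - e4 - e5 - e6 - e7 - e8 - e9

lemma D2 : 2 * H4S p 3 1 2 1 + 3 * H4S p 3 1 1 2 + H4S p 2 2 1 2
    + 2 * H4S p 1 3 1 2 = 0 := by
  have e1 : H4S p 3 1 2 1
      = - ∑ a ∈ Ioo 0 p, ∑ b ∈ Ioo a p, ∑ c ∈ Ioo b p, ∑ s ∈ Ioo c p,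
          W p a ^ 3 * W p b ^ 1 * W p c ^ 2 * ((s : ZMod p) - (c : ZMod p))⁻¹ := by
    unfold H4S
    rw [← Finset.sum_neg_distrib]
    refine Finset.sum_congr rfl fun a ha => ?_
    rw [← Finset.sum_neg_distrib]
    refine Finset.sum_congr rfl fun b hb => ?_
    rw [← Finset.sum_neg_distrib]
    refine Finset.sum_congr rfl fun c hc => ?_
    rw [h_refl c p (fun d => W p a ^ 3 * W p b ^ 1 * W p c ^ 2 * W p d ^ 1),
      ← Finset.sum_neg_distrib]
    refine Finset.sum_congr rfl fun s hs => ?_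
    simp only [mem_Ioo] at ha hb hc hs
    rw [inv_reflect_top p hs.1 hs.2]
    ring
  have e2 : (∑ a ∈ Ioo 0 p, ∑ b ∈ Ioo a p, ∑ c ∈ Ioo b p, ∑ s ∈ Ioo c p,
        W p a ^ 3 * W p b ^ 1 * W p c ^ 2 * ((s : ZMod p) - (c : ZMod p))⁻¹)
      = H4S p 3 1 2 1 + H4S p 3 1 1 2
        + ∑ a ∈ Ioo 0 p, ∑ b ∈ Ioo a p, ∑ c ∈ Ioo b p, ∑ s ∈ Ioo c p,
            W p a ^ 3 * W p b ^ 1 * ((s : ZMod p) - (c : ZMod p))⁻¹ * W p s ^ 2 := by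
    unfold H4S
    rw [← Finset.sum_add_distrib, ← Finset.sum_add_distrib]
    refine Finset.sum_congr rfl fun a ha => ?_
    rw [← Finset.sum_add_distrib, ← Finset.sum_add_distrib]
    refine Finset.sum_congr rfl fun b hb => ?_
    rw [← Finset.sum_add_distrib, ← Finset.sum_add_distrib]
    refine Finset.sum_congr rfl fun c hc => ?_
    rw [← Finset.sum_add_distrib, ← Finset.sum_add_distrib]
    refine Finset.sum_congr rfl fun s hs => ?_
    simp only [mem_Ioo] at ha hb hc hs
    have hc0 : ((c : ZMod p)) ≠ 0 := cast_ne_zero_of_lt p (by omega) (by omega)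
    have hs0 : ((s : ZMod p)) ≠ 0 := cast_ne_zero_of_lt p (by omega) (by omega)
    have hsc : (s : ZMod p) - (c : ZMod p) ≠ 0 := cast_sub_ne_zero p (by omega) (by omega)
    have key := pf2 p (c : ZMod p) (s : ZMod p) hc0 hs0 hsc
    calc W p a ^ 3 * W p b ^ 1 * W p c ^ 2 * ((s : ZMod p) - (c : ZMod p))⁻¹
        = W p a ^ 3 * W p b ^ 1
            * (((c : ZMod p))⁻¹ ^ 2 * ((s : ZMod p) - (c : ZMod p))⁻¹) := by
          unfold W; ring
      _ = W p a ^ 3 * W p b ^ 1 * (((s : ZMod p))⁻¹ * ((c : ZMod p))⁻¹ ^ 2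
            + ((s : ZMod p))⁻¹ ^ 2 * ((c : ZMod p))⁻¹
            + ((s : ZMod p))⁻¹ ^ 2 * ((s : ZMod p) - (c : ZMod p))⁻¹) := by rw [key]
      _ = W p a ^ 3 * W p b ^ 1 * W p c ^ 2 * W p s ^ 1
            + W p a ^ 3 * W p b ^ 1 * W p c ^ 1 * W p s ^ 2
            + W p a ^ 3 * W p b ^ 1 * ((s : ZMod p) - (c : ZMod p))⁻¹ * W p s ^ 2 := by
          unfold W; ring
  have e3 : (∑ a ∈ Ioo 0 p, ∑ b ∈ Ioo a p, ∑ c ∈ Ioo b p, ∑ s ∈ Ioo c p,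
        W p a ^ 3 * W p b ^ 1 * ((s : ZMod p) - (c : ZMod p))⁻¹ * W p s ^ 2)
      = ∑ a ∈ Ioo 0 p, ∑ b ∈ Ioo a p, ∑ c ∈ Ioo b p, ∑ s ∈ Ioo c p,
          W p a ^ 3 * W p b ^ 1 * ((c : ZMod p) - (b : ZMod p))⁻¹ * W p s ^ 2 := by
    refine Finset.sum_congr rfl fun a ha => ?_
    refine Finset.sum_congr rfl fun b hb => ?_
    rw [← h_swap b p (fun c s =>
      W p a ^ 3 * W p b ^ 1 * ((s : ZMod p) - (c : ZMod p))⁻¹ * W p s ^ 2)]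
    rw [← h_swap b p (fun c s =>
      W p a ^ 3 * W p b ^ 1 * ((c : ZMod p) - (b : ZMod p))⁻¹ * W p s ^ 2)]
    refine Finset.sum_congr rfl fun s hs => ?_
    rw [h_refl b s (fun c =>
      W p a ^ 3 * W p b ^ 1 * ((s : ZMod p) - (c : ZMod p))⁻¹ * W p s ^ 2)]
    refine Finset.sum_congr rfl fun c hc => ?_
    simp only [mem_Ioo] at hc
    rw [sub_reflect p hc.1 hc.2]
  have e4 : (∑ a ∈ Ioo 0 p, ∑ b ∈ Ioo a p, ∑ c ∈ Ioo b p, ∑ s ∈ Ioo c p,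
        W p a ^ 3 * W p b ^ 1 * ((c : ZMod p) - (b : ZMod p))⁻¹ * W p s ^ 2)
      = H4S p 3 1 1 2
        + ∑ a ∈ Ioo 0 p, ∑ b ∈ Ioo a p, ∑ c ∈ Ioo b p, ∑ s ∈ Ioo c p,
            W p a ^ 3 * ((c : ZMod p) - (b : ZMod p))⁻¹ * W p c ^ 1 * W p s ^ 2 := by
    unfold H4S
    rw [← Finset.sum_add_distrib]
    refine Finset.sum_congr rfl fun a ha => ?_
    rw [← Finset.sum_add_distrib]
    refine Finset.sum_congr rfl fun b hb => ?_
    rw [← Finset.sum_add_distrib]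
    refine Finset.sum_congr rfl fun c hc => ?_
    rw [← Finset.sum_add_distrib]
    refine Finset.sum_congr rfl fun s hs => ?_
    simp only [mem_Ioo] at ha hb hc hs
    have hb0 : ((b : ZMod p)) ≠ 0 := cast_ne_zero_of_lt p (by omega) (by omega)
    have hc0 : ((c : ZMod p)) ≠ 0 := cast_ne_zero_of_lt p (by omega) (by omega)
    have hcb : (c : ZMod p) - (b : ZMod p) ≠ 0 := cast_sub_ne_zero p (by omega) (by omega)
    have key := pf1 p (b : ZMod p) (c : ZMod p) hb0 hc0 hcb
    calc W p a ^ 3 * W p b ^ 1 * ((c : ZMod p) - (b : ZMod p))⁻¹ * W p s ^ 2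
        = W p a ^ 3 * (((b : ZMod p))⁻¹ * ((c : ZMod p) - (b : ZMod p))⁻¹)
            * W p s ^ 2 := by unfold W; ring
      _ = W p a ^ 3 * (((c : ZMod p))⁻¹ * ((b : ZMod p))⁻¹
            + ((c : ZMod p))⁻¹ * ((c : ZMod p) - (b : ZMod p))⁻¹) * W p s ^ 2 := by
          rw [key]
      _ = W p a ^ 3 * W p b ^ 1 * W p c ^ 1 * W p s ^ 2
            + W p a ^ 3 * ((c : ZMod p) - (b : ZMod p))⁻¹ * W p c ^ 1 * W p s ^ 2 := by
          unfold W; ring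
  have e5 : (∑ a ∈ Ioo 0 p, ∑ b ∈ Ioo a p, ∑ c ∈ Ioo b p, ∑ s ∈ Ioo c p,
        W p a ^ 3 * ((c : ZMod p) - (b : ZMod p))⁻¹ * W p c ^ 1 * W p s ^ 2)
      = ∑ a ∈ Ioo 0 p, ∑ c ∈ Ioo a p, ∑ b ∈ Ioo a c, ∑ s ∈ Ioo c p,
          W p a ^ 3 * ((b : ZMod p) - (a : ZMod p))⁻¹ * W p c ^ 1 * W p s ^ 2 := by
    refine Finset.sum_congr rfl fun a ha => ?_
    rw [← h_swap a p (fun b c => ∑ s ∈ Ioo c p,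
      W p a ^ 3 * ((c : ZMod p) - (b : ZMod p))⁻¹ * W p c ^ 1 * W p s ^ 2)]
    refine Finset.sum_congr rfl fun c hc => ?_
    rw [h_refl a c (fun b => ∑ s ∈ Ioo c p,
      W p a ^ 3 * ((c : ZMod p) - (b : ZMod p))⁻¹ * W p c ^ 1 * W p s ^ 2)]
    refine Finset.sum_congr rfl fun b hb => ?_
    simp only [mem_Ioo] at hb
    refine Finset.sum_congr rfl fun s hs => ?_
    rw [sub_reflect p hb.1 hb.2]
  have e6 : (∑ a ∈ Ioo 0 p, ∑ c ∈ Ioo a p, ∑ b ∈ Ioo a c, ∑ s ∈ Ioo c p,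
        W p a ^ 3 * ((b : ZMod p) - (a : ZMod p))⁻¹ * W p c ^ 1 * W p s ^ 2)
      = (∑ a ∈ Ioo 0 p, ∑ c ∈ Ioo a p, ∑ b ∈ Ioo a c, ∑ s ∈ Ioo c p,
          W p a ^ 3 * W p b ^ 1 * W p c ^ 1 * W p s ^ 2)
        + (∑ a ∈ Ioo 0 p, ∑ c ∈ Ioo a p, ∑ b ∈ Ioo a c, ∑ s ∈ Ioo c p,
            W p a ^ 2 * W p b ^ 2 * W p c ^ 1 * W p s ^ 2)
        + (∑ a ∈ Ioo 0 p, ∑ c ∈ Ioo a p, ∑ b ∈ Ioo a c, ∑ s ∈ Ioo c p,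
            W p a ^ 1 * W p b ^ 3 * W p c ^ 1 * W p s ^ 2)
        + (∑ a ∈ Ioo 0 p, ∑ c ∈ Ioo a p, ∑ b ∈ Ioo a c, ∑ s ∈ Ioo c p,
            ((b : ZMod p) - (a : ZMod p))⁻¹ * W p b ^ 3 * W p c ^ 1 * W p s ^ 2) := by
    rw [← Finset.sum_add_distrib, ← Finset.sum_add_distrib, ← Finset.sum_add_distrib]
    refine Finset.sum_congr rfl fun a ha => ?_
    rw [← Finset.sum_add_distrib, ← Finset.sum_add_distrib, ← Finset.sum_add_distrib]
    refine Finset.sum_congr rfl fun c hc => ?_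
    rw [← Finset.sum_add_distrib, ← Finset.sum_add_distrib, ← Finset.sum_add_distrib]
    refine Finset.sum_congr rfl fun b hb => ?_
    rw [← Finset.sum_add_distrib, ← Finset.sum_add_distrib, ← Finset.sum_add_distrib]
    refine Finset.sum_congr rfl fun s hs => ?_
    simp only [mem_Ioo] at ha hb hc hs
    have ha0 : ((a : ZMod p)) ≠ 0 := cast_ne_zero_of_lt p (by omega) (by omega)
    have hb0 : ((b : ZMod p)) ≠ 0 := cast_ne_zero_of_lt p (by omega) (by omega)
    have hba : (b : ZMod p) - (a : ZMod p) ≠ 0 := cast_sub_ne_zero p (by omega) (by omega)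
    have key := pf3 p (a : ZMod p) (b : ZMod p) ha0 hb0 hba
    calc W p a ^ 3 * ((b : ZMod p) - (a : ZMod p))⁻¹ * W p c ^ 1 * W p s ^ 2
        = (((a : ZMod p))⁻¹ ^ 3 * ((b : ZMod p) - (a : ZMod p))⁻¹)
            * (W p c ^ 1 * W p s ^ 2) := by unfold W; ring
      _ = (((b : ZMod p))⁻¹ * ((a : ZMod p))⁻¹ ^ 3
            + ((b : ZMod p))⁻¹ ^ 2 * ((a : ZMod p))⁻¹ ^ 2
            + ((b : ZMod p))⁻¹ ^ 3 * ((a : ZMod p))⁻¹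
            + ((b : ZMod p))⁻¹ ^ 3 * ((b : ZMod p) - (a : ZMod p))⁻¹)
            * (W p c ^ 1 * W p s ^ 2) := by rw [key]
      _ = W p a ^ 3 * W p b ^ 1 * W p c ^ 1 * W p s ^ 2
            + W p a ^ 2 * W p b ^ 2 * W p c ^ 1 * W p s ^ 2
            + W p a ^ 1 * W p b ^ 3 * W p c ^ 1 * W p s ^ 2
            + ((b : ZMod p) - (a : ZMod p))⁻¹ * W p b ^ 3 * W p c ^ 1 * W p s ^ 2 := by
          unfold W; ring
  have e7 : (∑ a ∈ Ioo 0 p, ∑ c ∈ Ioo a p, ∑ b ∈ Ioo a c, ∑ s ∈ Ioo c p,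
        W p a ^ 3 * W p b ^ 1 * W p c ^ 1 * W p s ^ 2) = H4S p 3 1 1 2 := by
    unfold H4S
    refine Finset.sum_congr rfl fun a ha => ?_
    rw [h_swap a p (fun b c => ∑ s ∈ Ioo c p,
      W p a ^ 3 * W p b ^ 1 * W p c ^ 1 * W p s ^ 2)]
  have e8 : (∑ a ∈ Ioo 0 p, ∑ c ∈ Ioo a p, ∑ b ∈ Ioo a c, ∑ s ∈ Ioo c p,
        W p a ^ 2 * W p b ^ 2 * W p c ^ 1 * W p s ^ 2) = H4S p 2 2 1 2 := by
    unfold H4S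
    refine Finset.sum_congr rfl fun a ha => ?_
    rw [h_swap a p (fun b c => ∑ s ∈ Ioo c p,
      W p a ^ 2 * W p b ^ 2 * W p c ^ 1 * W p s ^ 2)]
  have e9 : (∑ a ∈ Ioo 0 p, ∑ c ∈ Ioo a p, ∑ b ∈ Ioo a c, ∑ s ∈ Ioo c p,
        W p a ^ 1 * W p b ^ 3 * W p c ^ 1 * W p s ^ 2) = H4S p 1 3 1 2 := by
    unfold H4S
    refine Finset.sum_congr rfl fun a ha => ?_
    rw [h_swap a p (fun b c => ∑ s ∈ Ioo c p,
      W p a ^ 1 * W p b ^ 3 * W p c ^ 1 * W p s ^ 2)]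
  have e10 : (∑ a ∈ Ioo 0 p, ∑ c ∈ Ioo a p, ∑ b ∈ Ioo a c, ∑ s ∈ Ioo c p,
        ((b : ZMod p) - (a : ZMod p))⁻¹ * W p b ^ 3 * W p c ^ 1 * W p s ^ 2)
      = H4S p 1 3 1 2 := by
    rw [← h_swap 0 p (fun a c => ∑ b ∈ Ioo a c, ∑ s ∈ Ioo c p,
      ((b : ZMod p) - (a : ZMod p))⁻¹ * W p b ^ 3 * W p c ^ 1 * W p s ^ 2)]
    have inner : ∀ c ∈ Ioo 0 p,
        (∑ a ∈ Ioo 0 c, ∑ b ∈ Ioo a c, ∑ s ∈ Ioo c p,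
          ((b : ZMod p) - (a : ZMod p))⁻¹ * W p b ^ 3 * W p c ^ 1 * W p s ^ 2)
        = ∑ b ∈ Ioo 0 c, ∑ a ∈ Ioo 0 b, ∑ s ∈ Ioo c p,
            W p a ^ 1 * W p b ^ 3 * W p c ^ 1 * W p s ^ 2 := by
      intro c hc
      rw [← h_swap 0 c (fun a b => ∑ s ∈ Ioo c p,
        ((b : ZMod p) - (a : ZMod p))⁻¹ * W p b ^ 3 * W p c ^ 1 * W p s ^ 2)]
      refine Finset.sum_congr rfl fun b hb => ?_
      rw [h_refl 0 b (fun a => ∑ s ∈ Ioo c p,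
        ((b : ZMod p) - (a : ZMod p))⁻¹ * W p b ^ 3 * W p c ^ 1 * W p s ^ 2)]
      refine Finset.sum_congr rfl fun a ha => ?_
      simp only [mem_Ioo] at ha
      refine Finset.sum_congr rfl fun s hs => ?_
      rw [sub_reflect p ha.1 ha.2, Nat.cast_zero, sub_zero]
      unfold W
      ring
    rw [Finset.sum_congr rfl inner]
    rw [h_swap 0 p (fun b c => ∑ a ∈ Ioo 0 b, ∑ s ∈ Ioo c p,
      W p a ^ 1 * W p b ^ 3 * W p c ^ 1 * W p s ^ 2)]
    have comm1 : ∀ b ∈ Ioo 0 p,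
        (∑ c ∈ Ioo b p, ∑ a ∈ Ioo 0 b, ∑ s ∈ Ioo c p,
          W p a ^ 1 * W p b ^ 3 * W p c ^ 1 * W p s ^ 2)
        = ∑ a ∈ Ioo 0 b, ∑ c ∈ Ioo b p, ∑ s ∈ Ioo c p,
            W p a ^ 1 * W p b ^ 3 * W p c ^ 1 * W p s ^ 2 :=
      fun b _ => Finset.sum_comm
    rw [Finset.sum_congr rfl comm1]
    rw [h_swap 0 p (fun a b => ∑ c ∈ Ioo b p, ∑ s ∈ Ioo c p,
      W p a ^ 1 * W p b ^ 3 * W p c ^ 1 * W p s ^ 2)]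
    unfold H4S
    rfl
  linear_combination e1 - e2 - e3 - e4 - e5 - e6 - e7 - e8 - e9 - e10

lemma W_def (n : ℕ) : W p n = ((n : ZMod p))⁻¹ := rfl

lemma decomp2 (a b c : ℕ) :
    Hcyc2 p a b c = H2S p (a + c) b + H3S p a c b + H2S p a (b + c) := by
  have mid : (∑ n1 ∈ Ioo 0 p, ∑ n2 ∈ Ioo n1 p, ∑ n3 ∈ Ioo n1 n2,
        W p n1 ^ a * W p n2 ^ b * W p n3 ^ c) = H3S p a c b := by
    unfold H3S
    refine Finset.sum_congr rfl fun n1 _ => ?_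
    rw [h_swap n1 p (fun n3 n2 => W p n1 ^ a * W p n2 ^ b * W p n3 ^ c)]
    exact Finset.sum_congr rfl fun y _ => Finset.sum_congr rfl fun z _ => by ring
  have main : Hcyc2 p a b c
      = (∑ n1 ∈ Ioo 0 p, ∑ n2 ∈ Ioo n1 p, W p n1 ^ (a + c) * W p n2 ^ b)
        + (∑ n1 ∈ Ioo 0 p, ∑ n2 ∈ Ioo n1 p, ∑ n3 ∈ Ioo n1 n2,
            W p n1 ^ a * W p n2 ^ b * W p n3 ^ c)
        + (∑ n1 ∈ Ioo 0 p, ∑ n2 ∈ Ioo n1 p, W p n1 ^ a * W p n2 ^ (b + c)) := by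
    unfold Hcyc2
    simp only [← W_def p]
    rw [← Finset.sum_add_distrib, ← Finset.sum_add_distrib]
    refine Finset.sum_congr rfl fun n1 hn1 => ?_
    rw [← Finset.sum_add_distrib, ← Finset.sum_add_distrib]
    refine Finset.sum_congr rfl fun n2 hn2 => ?_
    simp only [mem_Ioo] at hn1 hn2
    rw [h_splitIcc n1 n2 hn2.1 (fun n3 => W p n1 ^ a * W p n2 ^ b * W p n3 ^ c)]
    rw [pow_add, pow_add]
    ring
  rw [main, mid]
  unfold H2S
  ring

lemma decomp3 (k1 k2 k3 c : ℕ) :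
    Hcyc3 p k1 k2 k3 c
      = H3S p (k1 + c) k2 k3 + H3S p k1 (k2 + c) k3 + H3S p k1 k2 (k3 + c)
        + H4S p k1 c k2 k3 + H4S p k1 k2 c k3 := by
  have mid1 : (∑ n1 ∈ Ioo 0 p, ∑ n2 ∈ Ioo n1 p, ∑ n3 ∈ Ioo n2 p, ∑ n4 ∈ Ioo n1 n2,
        W p n1 ^ k1 * W p n2 ^ k2 * W p n3 ^ k3 * W p n4 ^ c) = H4S p k1 c k2 k3 := by
    unfold H4S
    refine Finset.sum_congr rfl fun n1 _ => ?_
    have comm : ∀ n2 ∈ Ioo n1 p,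
        (∑ n3 ∈ Ioo n2 p, ∑ n4 ∈ Ioo n1 n2,
          W p n1 ^ k1 * W p n2 ^ k2 * W p n3 ^ k3 * W p n4 ^ c)
        = ∑ n4 ∈ Ioo n1 n2, ∑ n3 ∈ Ioo n2 p,
            W p n1 ^ k1 * W p n2 ^ k2 * W p n3 ^ k3 * W p n4 ^ c :=
      fun n2 _ => Finset.sum_comm
    rw [Finset.sum_congr rfl comm]
    rw [h_swap n1 p (fun n4 n2 => ∑ n3 ∈ Ioo n2 p,
      W p n1 ^ k1 * W p n2 ^ k2 * W p n3 ^ k3 * W p n4 ^ c)]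
    refine Finset.sum_congr rfl fun x _ => Finset.sum_congr rfl fun y _ =>
      Finset.sum_congr rfl fun z _ => by ring
  have mid2 : (∑ n1 ∈ Ioo 0 p, ∑ n2 ∈ Ioo n1 p, ∑ n3 ∈ Ioo n2 p, ∑ n4 ∈ Ioo n2 n3,
        W p n1 ^ k1 * W p n2 ^ k2 * W p n3 ^ k3 * W p n4 ^ c) = H4S p k1 k2 c k3 := by
    unfold H4S
    refine Finset.sum_congr rfl fun n1 _ => ?_
    refine Finset.sum_congr rfl fun n2 _ => ?_
    rw [h_swap n2 p (fun n4 n3 =>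
      W p n1 ^ k1 * W p n2 ^ k2 * W p n3 ^ k3 * W p n4 ^ c)]
    refine Finset.sum_congr rfl fun y _ => Finset.sum_congr rfl fun z _ => by ring
  have main : Hcyc3 p k1 k2 k3 c
      = (∑ n1 ∈ Ioo 0 p, ∑ n2 ∈ Ioo n1 p, ∑ n3 ∈ Ioo n2 p,
          W p n1 ^ (k1 + c) * W p n2 ^ k2 * W p n3 ^ k3)
        + (∑ n1 ∈ Ioo 0 p, ∑ n2 ∈ Ioo n1 p, ∑ n3 ∈ Ioo n2 p,
            W p n1 ^ k1 * W p n2 ^ (k2 + c) * W p n3 ^ k3)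
        + (∑ n1 ∈ Ioo 0 p, ∑ n2 ∈ Ioo n1 p, ∑ n3 ∈ Ioo n2 p,
            W p n1 ^ k1 * W p n2 ^ k2 * W p n3 ^ (k3 + c))
        + (∑ n1 ∈ Ioo 0 p, ∑ n2 ∈ Ioo n1 p, ∑ n3 ∈ Ioo n2 p, ∑ n4 ∈ Ioo n1 n2,
            W p n1 ^ k1 * W p n2 ^ k2 * W p n3 ^ k3 * W p n4 ^ c)
        + (∑ n1 ∈ Ioo 0 p, ∑ n2 ∈ Ioo n1 p, ∑ n3 ∈ Ioo n2 p, ∑ n4 ∈ Ioo n2 n3,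
            W p n1 ^ k1 * W p n2 ^ k2 * W p n3 ^ k3 * W p n4 ^ c) := by
    unfold Hcyc3
    simp only [← W_def p]
    rw [← Finset.sum_add_distrib, ← Finset.sum_add_distrib, ← Finset.sum_add_distrib,
      ← Finset.sum_add_distrib]
    refine Finset.sum_congr rfl fun n1 hn1 => ?_
    rw [← Finset.sum_add_distrib, ← Finset.sum_add_distrib, ← Finset.sum_add_distrib,
      ← Finset.sum_add_distrib]
    refine Finset.sum_congr rfl fun n2 hn2 => ?_
    rw [← Finset.sum_add_distrib, ← Finset.sum_add_distrib, ← Finset.sum_add_distrib,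
      ← Finset.sum_add_distrib]
    refine Finset.sum_congr rfl fun n3 hn3 => ?_
    simp only [mem_Ioo] at hn1 hn2 hn3
    rw [h_splitIcc n1 n3 (by omega)
      (fun n4 => W p n1 ^ k1 * W p n2 ^ k2 * W p n3 ^ k3 * W p n4 ^ c)]
    rw [h_split n1 n2 n3 hn2.1 hn3.1
      (fun n4 => W p n1 ^ k1 * W p n2 ^ k2 * W p n3 ^ k3 * W p n4 ^ c)]
    rw [pow_add, pow_add, pow_add]
    ring
  rw [main, mid1, mid2]
  unfold H3S
  ring

end MHS

end MHSAux

theorem cyclic_example_congruence :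
    ∃ N : ℕ, ∀ p : ℕ, p.Prime → N < p →
      2 * Hcyc2 p 1 3 3 + 2 * Hcyc2 p 1 4 2 + 2 * Hcyc2 p 2 3 2
        + Hcyc3 p 1 1 3 2 - Hcyc3 p 1 2 2 2 = 0 := by
  use 8
  intro p hp hN
  haveI : Fact p.Prime := ⟨hp⟩
  open MHSAux in
  rw [decomp2 p 1 3 3, decomp2 p 1 4 2, decomp2 p 2 3 2,
    decomp3 p 1 1 3 2, decomp3 p 1 2 2 2]
  have s1 : H1S p 1 = 0 := H1S_eq_zero p (by omega) (by omega)
  have s2 : H1S p 2 = 0 := H1S_eq_zero p (by omega) (by omega)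
  have s3 : H1S p 3 = 0 := H1S_eq_zero p (by omega) (by omega)
  have stA := st13H p 1 3 2 1
  rw [s1, zero_mul] at stA
  have stB := st12H p 1 5 1
  rw [s1, zero_mul] at stB
  have stC := st13H p 2 2 2 1
  rw [s2, zero_mul] at stC
  have stD := st13H p 2 3 1 1
  rw [s2, zero_mul] at stD
  have stE := st12H p 3 3 1
  rw [s3, zero_mul] at stE
  have r43 := hrev2 p 4 3 (by norm_num)
  have r52 := hrev2 p 5 2 (by norm_num)
  have r61 := hrev2 p 6 1 (by norm_num)
  have r322 := hrev3 p 3 2 2 (by norm_num)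
  have r331 := hrev3 p 3 3 1 (by norm_num)
  have r421 := hrev3 p 4 2 1 (by norm_num)
  have r511 := hrev3 p 5 1 1 (by norm_num)
  have r241 := hrev3 p 2 4 1 (by norm_num)
  have r151 := hrev3 p 1 5 1 (by norm_num)
  have r1321 := hrev4 p 1 3 2 1 (by norm_num)
  have r2131 := hrev4 p 2 1 3 1 (by norm_num)
  have r2221 := hrev4 p 2 2 2 1 (by norm_num)
  have r3121 := hrev4 p 3 1 2 1 (by norm_num)
  have r3211 := hrev4 p 3 2 1 1 (by norm_num)
  have hD1 := D1 p
  have hD2 := D2 p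
  linear_combination 4 * r43 + 2 * r52 + 4 * r61 + r322 + 3 * r331 + r421 + r511
    - r241 + r151 + 2 * r1321 + 2 * r2131 - 2 * r2221 + r3121 + r3211
    + 2 * stA + 2 * stB - stC - 3 * stD + 2 * stE - hD1 - hD2
end
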